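/- arXiv:math/0407153 — 5 statements merged into one kernel-verified Lean document; each statement's English description precedes it below -/
import Mathlib

section
/- Let Ω ⊆ ℝ² be open and connected, and let f : Ω → ℝ³ be an immersion in conformal curvature coordinates with conformal factor ρ, unit normal ν and principal curvatures κ₁, κ₂. If the mean curvature H = (κ₁ + κ₂)/2 is constant on Ω, then the function (κ₂ − κ₁)ρ² is constant on Ω. -/
open scoped RealInnerProductSpace ContDiff

/-- First partial derivative (in the first coordinate direction of `ℝ × ℝ`). -/
noncomputable def pd1 {E : Type*} [NormedAddCommGroup E] [NormedSpace ℝ E]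
    (f : ℝ × ℝ → E) : ℝ × ℝ → E := fun p => fderiv ℝ f p (1, 0)

/-- Second partial derivative (in the second coordinate direction of `ℝ × ℝ`). -/
noncomputable def pd2 {E : Type*} [NormedAddCommGroup E] [NormedSpace ℝ E]
    (f : ℝ × ℝ → E) : ℝ × ℝ → E := fun p => fderiv ℝ f p (0, 1)

/-- `f : Ω → ℝ³` is an immersion in conformal curvature coordinates, with conformal
factor `ρ`, unit normal `ν` and principal curvatures `κ₁, κ₂`. -/
structure IsCCC (Ω : Set (ℝ × ℝ)) (f ν : ℝ × ℝ → EuclideanSpace ℝ (Fin 3))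
    (ρ κ₁ κ₂ : ℝ × ℝ → ℝ) : Prop where
  smooth_f : ContDiffOn ℝ ∞ f Ω
  smooth_ρ : ContDiffOn ℝ ∞ ρ Ω
  smooth_ν : ContDiffOn ℝ ∞ ν Ω
  smooth_κ₁ : ContDiffOn ℝ ∞ κ₁ Ω
  smooth_κ₂ : ContDiffOn ℝ ∞ κ₂ Ω
  ρ_pos : ∀ p ∈ Ω, 0 < ρ p
  g11 : ∀ p ∈ Ω, ⟪pd1 f p, pd1 f p⟫ = ρ p ^ 2
  g22 : ∀ p ∈ Ω, ⟪pd2 f p, pd2 f p⟫ = ρ p ^ 2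
  g12 : ∀ p ∈ Ω, ⟪pd1 f p, pd2 f p⟫ = 0
  nu_unit : ∀ p ∈ Ω, ⟪ν p, ν p⟫ = 1
  nu_f1 : ∀ p ∈ Ω, ⟪ν p, pd1 f p⟫ = 0
  nu_f2 : ∀ p ∈ Ω, ⟪ν p, pd2 f p⟫ = 0
  h12 : ∀ p ∈ Ω, ⟪ν p, pd1 (pd2 f) p⟫ = 0
  h11 : ∀ p ∈ Ω, ⟪ν p, pd1 (pd1 f) p⟫ = ρ p ^ 2 * κ₁ p
  h22 : ∀ p ∈ Ω, ⟪ν p, pd2 (pd2 f) p⟫ = ρ p ^ 2 * κ₂ p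

section Aux

variable {E : Type*} [NormedAddCommGroup E] [NormedSpace ℝ E]

lemma pd1_contDiffOn {Ω : Set (ℝ × ℝ)} (hΩ : IsOpen Ω) {g : ℝ × ℝ → E}
    (hg : ContDiffOn ℝ ∞ g Ω) : ContDiffOn ℝ ∞ (pd1 g) Ω :=
  (((contDiffOn_infty_iff_fderiv_of_isOpen hΩ).1 hg).2).clm_apply contDiffOn_const

lemma pd2_contDiffOn {Ω : Set (ℝ × ℝ)} (hΩ : IsOpen Ω) {g : ℝ × ℝ → E}
    (hg : ContDiffOn ℝ ∞ g Ω) : ContDiffOn ℝ ∞ (pd2 g) Ω :=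
  (((contDiffOn_infty_iff_fderiv_of_isOpen hΩ).1 hg).2).clm_apply contDiffOn_const

lemma diffAt_of_contDiffOn {Ω : Set (ℝ × ℝ)} (hΩ : IsOpen Ω) {g : ℝ × ℝ → E}
    (hg : ContDiffOn ℝ ∞ g Ω) {p : ℝ × ℝ} (hp : p ∈ Ω) : DifferentiableAt ℝ g p :=
  (hg.contDiffAt (hΩ.mem_nhds hp)).differentiableAt (by decide)

lemma fderiv_eqOn {Ω : Set (ℝ × ℝ)} (hΩ : IsOpen Ω) {p : ℝ × ℝ} (hp : p ∈ Ω)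
    {F G : ℝ × ℝ → E} (h : ∀ q ∈ Ω, F q = G q) : fderiv ℝ F p = fderiv ℝ G p :=
  Filter.EventuallyEq.fderiv_eq (by filter_upwards [hΩ.mem_nhds hp] using h)

lemma pd_comm {Ω : Set (ℝ × ℝ)} (hΩ : IsOpen Ω) {g : ℝ × ℝ → E}
    (hg : ContDiffOn ℝ ∞ g Ω) {p : ℝ × ℝ} (hp : p ∈ Ω) :
    pd1 (pd2 g) p = pd2 (pd1 g) p := by
  have hat : ContDiffAt ℝ ∞ g p := hg.contDiffAt (hΩ.mem_nhds hp)
  have hsym : IsSymmSndFDerivAt ℝ g p :=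
    hat.isSymmSndFDerivAt (by simp; decide)
  have hd : DifferentiableAt ℝ (fderiv ℝ g) p := by
    have h1 : ContDiffAt ℝ 1 (fderiv ℝ g) p :=
      hat.fderiv_right (m := 1) (by decide)
    exact h1.differentiableAt one_ne_zero
  have e2 : ∀ v u : ℝ × ℝ,
      fderiv ℝ (fun q => fderiv ℝ g q v) p u = fderiv ℝ (fderiv ℝ g) p u v := by
    intro v u
    have := fderiv_clm_apply (c := fderiv ℝ g) (u := fun _ => v) hd (differentiableAt_const v)
    rw [this]
    simp
  show fderiv ℝ (fun q => fderiv ℝ g q (0, 1)) p (1, 0)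
      = fderiv ℝ (fun q => fderiv ℝ g q (1, 0)) p (0, 1)
  rw [e2, e2]
  exact hsym _ _

lemma parseval3 (u v w x y : EuclideanSpace ℝ (Fin 3))
    (hu : ⟪u, u⟫ = 1) (hv : ⟪v, v⟫ = 1) (hw : ⟪w, w⟫ = 1)
    (huv : ⟪u, v⟫ = 0) (huw : ⟪u, w⟫ = 0) (hvw : ⟪v, w⟫ = 0) :
    ⟪x, y⟫ = ⟪x, u⟫ * ⟪u, y⟫ + ⟪x, v⟫ * ⟪v, y⟫ + ⟪x, w⟫ * ⟪w, y⟫ := by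
  have hor : Orthonormal ℝ ![u, v, w] := by
    rw [orthonormal_iff_ite]
    intro i j
    fin_cases i <;> fin_cases j <;>
      simp_all [real_inner_comm u v, real_inner_comm u w, real_inner_comm v w,
        real_inner_self_eq_norm_sq]
  have hcard : Fintype.card (Fin 3) = Module.finrank ℝ (EuclideanSpace ℝ (Fin 3)) := by
    simp
  let B := basisOfOrthonormalOfCardEqFinrank hor hcard
  have hB : ⇑B = ![u, v, w] := coe_basisOfOrthonormalOfCardEqFinrank hor hcard
  let b : OrthonormalBasis (Fin 3) ℝ (EuclideanSpace ℝ (Fin 3)) :=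
    B.toOrthonormalBasis (by rwa [hB])
  have hb : ∀ i, b i = ![u, v, w] i := by
    intro i
    have : ⇑b = ⇑B := B.coe_toOrthonormalBasis _
    rw [this, hB]
  have := b.sum_inner_mul_inner x y
  rw [Fin.sum_univ_three, hb 0, hb 1, hb 2] at this
  simpa using this.symm

lemma expand3 (r : ℝ) (hr : r ≠ 0) (a b w x y : EuclideanSpace ℝ (Fin 3))
    (haa : ⟪a, a⟫ = r ^ 2) (hbb : ⟪b, b⟫ = r ^ 2) (hww : ⟪w, w⟫ = 1)
    (hab : ⟪a, b⟫ = 0) (haw : ⟪a, w⟫ = 0) (hbw : ⟪b, w⟫ = 0) :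
    ⟪x, y⟫ = (⟪x, a⟫ * ⟪a, y⟫ + ⟪x, b⟫ * ⟪b, y⟫) / r ^ 2 + ⟪x, w⟫ * ⟪w, y⟫ := by
  have h := parseval3 (r⁻¹ • a) (r⁻¹ • b) w x y
    (by rw [real_inner_smul_left, real_inner_smul_right, haa]; field_simp)
    (by rw [real_inner_smul_left, real_inner_smul_right, hbb]; field_simp)
    hww
    (by rw [real_inner_smul_left, real_inner_smul_right, hab]; ring)
    (by rw [real_inner_smul_left, haw]; ring)
    (by rw [real_inner_smul_left, hbw]; ring)
  rw [h, real_inner_smul_left, real_inner_smul_left, real_inner_smul_right,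
    real_inner_smul_right]
  field_simp

lemma const_of_fderiv_zero {Ω : Set (ℝ × ℝ)} (hΩ : IsOpen Ω) (hconn : IsConnected Ω)
    {φ : ℝ × ℝ → ℝ} (hdiff : ∀ p ∈ Ω, DifferentiableAt ℝ φ p)
    (hz : ∀ p ∈ Ω, fderiv ℝ φ p = 0) : ∃ c : ℝ, ∀ p ∈ Ω, φ p = c := by
  obtain ⟨p₀, hp₀⟩ := hconn.nonempty
  refine ⟨φ p₀, ?_⟩
  have hloc : ∀ q ∈ Ω, ∀ᶠ x in nhds q, φ x = φ q := by
    intro q hq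
    obtain ⟨ε, hε, hball⟩ := Metric.isOpen_iff.1 hΩ q hq
    have hconv : Convex ℝ (Metric.ball q ε) := convex_ball q ε
    filter_upwards [Metric.ball_mem_nhds q hε] with x hx
    refine hconv.is_const_of_fderivWithin_eq_zero (𝕜 := ℝ)
      (fun z hz' => ((hdiff z (hball hz')).differentiableWithinAt)) ?_ hx
      (Metric.mem_ball_self hε)
    intro z hz'
    rw [fderivWithin_of_isOpen Metric.isOpen_ball hz']
    exact hz z (hball hz')
  set A : Set (ℝ × ℝ) := {q ∈ Ω | φ q = φ p₀} with hA
  set B : Set (ℝ × ℝ) := {q ∈ Ω | φ q ≠ φ p₀} with hB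
  have hAopen : IsOpen A := by
    rw [isOpen_iff_mem_nhds]
    rintro q ⟨hq, hqv⟩
    filter_upwards [hloc q hq, hΩ.mem_nhds hq] with x hx hxΩ
    exact ⟨hxΩ, hx.trans hqv⟩
  have hBopen : IsOpen B := by
    rw [isOpen_iff_mem_nhds]
    rintro q ⟨hq, hqv⟩
    filter_upwards [hloc q hq, hΩ.mem_nhds hq] with x hx hxΩ
    exact ⟨hxΩ, by rw [hx]; exact hqv⟩
  have hsub : Ω ⊆ A ∪ B := by
    intro q hq
    by_cases h : φ q = φ p₀
    · exact Or.inl ⟨hq, h⟩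
    · exact Or.inr ⟨hq, h⟩
  have hdisj : Ω ∩ (A ∩ B) = ∅ := by
    ext q
    simp only [Set.mem_inter_iff, Set.mem_empty_iff_false, iff_false]
    rintro ⟨-, ⟨-, h1⟩, ⟨-, h2⟩⟩
    exact h2 h1
  rcases (isPreconnected_iff_subset_of_disjoint.1 hconn.isPreconnected A B hAopen hBopen
    hsub hdisj) with h | h
  · intro p hp
    exact (h hp).2
  · exact absurd ((h hp₀).2) (by simp)

end Aux

/-- On an open connected domain, for an immersion in conformal curvature
coordinates with constant mean curvature `H = (κ₁ + κ₂)/2`, the function `(κ₂ - κ₁)ρ²`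
is constant. -/
theorem hopf_const (Ω : Set (ℝ × ℝ)) (hΩ : IsOpen Ω) (hconn : IsConnected Ω)
    (f ν : ℝ × ℝ → EuclideanSpace ℝ (Fin 3)) (ρ κ₁ κ₂ : ℝ × ℝ → ℝ)
    (hccc : IsCCC Ω f ν ρ κ₁ κ₂)
    (hH : ∃ H : ℝ, ∀ p ∈ Ω, (κ₁ p + κ₂ p) / 2 = H) :
    ∃ c : ℝ, ∀ p ∈ Ω, (κ₂ p - κ₁ p) * ρ p ^ 2 = c := by
  obtain ⟨H, hH⟩ := hH
  set P : ℝ × ℝ → ℝ := fun q => ρ q ^ 2 with hPdef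
  set Q₁ : ℝ × ℝ → ℝ := fun q => P q * κ₁ q with hQ₁def
  set Q₂ : ℝ × ℝ → ℝ := fun q => P q * κ₂ q with hQ₂def
  set φ : ℝ × ℝ → ℝ := fun q => (κ₂ q - κ₁ q) * ρ q ^ 2 with hφdef
  -- smoothness bookkeeping
  have hfs := hccc.smooth_f
  have hf1 : ContDiffOn ℝ ∞ (pd1 f) Ω := pd1_contDiffOn hΩ hfs
  have hf2 : ContDiffOn ℝ ∞ (pd2 f) Ω := pd2_contDiffOn hΩ hfs
  have hf11 : ContDiffOn ℝ ∞ (pd1 (pd1 f)) Ω := pd1_contDiffOn hΩ hf1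
  have ha12 : ContDiffOn ℝ ∞ (pd2 (pd1 f)) Ω := pd2_contDiffOn hΩ hf1
  have hb12 : ContDiffOn ℝ ∞ (pd1 (pd2 f)) Ω := pd1_contDiffOn hΩ hf2
  have hf22 : ContDiffOn ℝ ∞ (pd2 (pd2 f)) Ω := pd2_contDiffOn hΩ hf2
  have key : ∀ p ∈ Ω, fderiv ℝ φ p = 0 := by
    intro p hp
    -- differentiability at p
    have dν : DifferentiableAt ℝ ν p := diffAt_of_contDiffOn hΩ hccc.smooth_ν hp
    have df1 : DifferentiableAt ℝ (pd1 f) p := diffAt_of_contDiffOn hΩ hf1 hp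
    have df2 : DifferentiableAt ℝ (pd2 f) p := diffAt_of_contDiffOn hΩ hf2 hp
    have df11 : DifferentiableAt ℝ (pd1 (pd1 f)) p := diffAt_of_contDiffOn hΩ hf11 hp
    have db12 : DifferentiableAt ℝ (pd1 (pd2 f)) p := diffAt_of_contDiffOn hΩ hb12 hp
    have df22 : DifferentiableAt ℝ (pd2 (pd2 f)) p := diffAt_of_contDiffOn hΩ hf22 hp
    have dρ : DifferentiableAt ℝ ρ p := diffAt_of_contDiffOn hΩ hccc.smooth_ρ hp
    have dκ₁ : DifferentiableAt ℝ κ₁ p := diffAt_of_contDiffOn hΩ hccc.smooth_κ₁ hp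
    have dκ₂ : DifferentiableAt ℝ κ₂ p := diffAt_of_contDiffOn hΩ hccc.smooth_κ₂ hp
    have dP : DifferentiableAt ℝ P p := dρ.pow 2
    have dQ₁ : DifferentiableAt ℝ Q₁ p := dP.mul dκ₁
    have dQ₂ : DifferentiableAt ℝ Q₂ p := dP.mul dκ₂
    set r : ℝ := ρ p with hrdef
    have hr : r ≠ 0 := ne_of_gt (hccc.ρ_pos p hp)
    set Pu : ℝ := fderiv ℝ P p (1, 0) with hPu
    set Pv : ℝ := fderiv ℝ P p (0, 1) with hPv
    -- commutation at points of Ω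
    have hcommf : ∀ q ∈ Ω, pd1 (pd2 f) q = pd2 (pd1 f) q :=
      fun q hq => pd_comm hΩ hfs hq
    have hcp : pd1 (pd2 f) p = pd2 (pd1 f) p := hcommf p hp
    -- derivative of g11 in both directions
    have E1 : fderiv ℝ (fun q => ⟪pd1 f q, pd1 f q⟫) p = fderiv ℝ P p :=
      fderiv_eqOn hΩ hp hccc.g11
    have i1 : ⟪pd1 f p, pd2 (pd1 f) p⟫ = Pv / 2 := by
      have h := congrArg (fun L : (ℝ × ℝ) →L[ℝ] ℝ => L (0, 1)) E1
      rw [fderiv_inner_apply ℝ df1 df1 (0, 1)] at h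
      have h' : (⟪pd1 f p, pd2 (pd1 f) p⟫ : ℝ) + ⟪pd2 (pd1 f) p, pd1 f p⟫ = Pv := h
      linarith [real_inner_comm (pd2 (pd1 f) p) (pd1 f p)]
    have i1' : ⟪pd1 f p, pd1 (pd1 f) p⟫ = Pu / 2 := by
      have h := congrArg (fun L : (ℝ × ℝ) →L[ℝ] ℝ => L (1, 0)) E1
      rw [fderiv_inner_apply ℝ df1 df1 (1, 0)] at h
      have h' : (⟪pd1 f p, pd1 (pd1 f) p⟫ : ℝ) + ⟪pd1 (pd1 f) p, pd1 f p⟫ = Pu := h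
      linarith [real_inner_comm (pd1 (pd1 f) p) (pd1 f p)]
    -- derivative of g22 in direction 1
    have E2 : fderiv ℝ (fun q => ⟪pd2 f q, pd2 f q⟫) p = fderiv ℝ P p :=
      fderiv_eqOn hΩ hp hccc.g22
    have i2 : ⟪pd2 f p, pd2 (pd1 f) p⟫ = Pu / 2 := by
      have h := congrArg (fun L : (ℝ × ℝ) →L[ℝ] ℝ => L (1, 0)) E2
      rw [fderiv_inner_apply ℝ df2 df2 (1, 0)] at h
      have h' : (⟪pd2 f p, pd1 (pd2 f) p⟫ : ℝ) + ⟪pd1 (pd2 f) p, pd2 f p⟫ = Pu := h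
      rw [hcp] at h'
      linarith [real_inner_comm (pd2 (pd1 f) p) (pd2 f p)]
    have i2' : ⟪pd2 f p, pd2 (pd2 f) p⟫ = Pv / 2 := by
      have h := congrArg (fun L : (ℝ × ℝ) →L[ℝ] ℝ => L (0, 1)) E2
      rw [fderiv_inner_apply ℝ df2 df2 (0, 1)] at h
      have h' : (⟪pd2 f p, pd2 (pd2 f) p⟫ : ℝ) + ⟪pd2 (pd2 f) p, pd2 f p⟫ = Pv := h
      linarith [real_inner_comm (pd2 (pd2 f) p) (pd2 f p)]
    -- derivative of g12
    have E3 : fderiv ℝ (fun q => ⟪pd1 f q, pd2 f q⟫) p = 0 := by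
      have := fderiv_eqOn hΩ hp (F := fun q => ⟪pd1 f q, pd2 f q⟫)
        (G := fun _ => (0 : ℝ)) hccc.g12
      rwa [fderiv_const_apply] at this
    have i3 : ⟪pd1 (pd1 f) p, pd2 f p⟫ = -(Pv / 2) := by
      have h := congrArg (fun L : (ℝ × ℝ) →L[ℝ] ℝ => L (1, 0)) E3
      simp only [ContinuousLinearMap.zero_apply] at h
      rw [fderiv_inner_apply ℝ df1 df2 (1, 0)] at h
      have h' : (⟪pd1 f p, pd1 (pd2 f) p⟫ : ℝ) + ⟪pd1 (pd1 f) p, pd2 f p⟫ = 0 := h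
      rw [hcp, i1] at h'
      linarith
    have i4 : ⟪pd1 f p, pd2 (pd2 f) p⟫ = -(Pu / 2) := by
      have h := congrArg (fun L : (ℝ × ℝ) →L[ℝ] ℝ => L (0, 1)) E3
      simp only [ContinuousLinearMap.zero_apply] at h
      rw [fderiv_inner_apply ℝ df1 df2 (0, 1)] at h
      have h' : (⟪pd1 f p, pd2 (pd2 f) p⟫ : ℝ) + ⟪pd2 (pd1 f) p, pd2 f p⟫ = 0 := h
      linarith [real_inner_comm (pd2 (pd1 f) p) (pd2 f p), i2]
    -- derivatives of unit-normal relations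
    have E4 : fderiv ℝ (fun q => ⟪ν q, ν q⟫) p = 0 := by
      have := fderiv_eqOn hΩ hp (F := fun q => ⟪ν q, ν q⟫)
        (G := fun _ => (1 : ℝ)) hccc.nu_unit
      rwa [fderiv_const_apply] at this
    have n1 : ⟪pd1 ν p, ν p⟫ = 0 := by
      have h := congrArg (fun L : (ℝ × ℝ) →L[ℝ] ℝ => L (1, 0)) E4
      simp only [ContinuousLinearMap.zero_apply] at h
      rw [fderiv_inner_apply ℝ dν dν (1, 0)] at h
      have h' : (⟪ν p, pd1 ν p⟫ : ℝ) + ⟪pd1 ν p, ν p⟫ = 0 := h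
      linarith [real_inner_comm (ν p) (pd1 ν p)]
    have n2 : ⟪pd2 ν p, ν p⟫ = 0 := by
      have h := congrArg (fun L : (ℝ × ℝ) →L[ℝ] ℝ => L (0, 1)) E4
      simp only [ContinuousLinearMap.zero_apply] at h
      rw [fderiv_inner_apply ℝ dν dν (0, 1)] at h
      have h' : (⟪ν p, pd2 ν p⟫ : ℝ) + ⟪pd2 ν p, ν p⟫ = 0 := h
      linarith [real_inner_comm (ν p) (pd2 ν p)]
    have E5 : fderiv ℝ (fun q => ⟪ν q, pd1 f q⟫) p = 0 := by
      have := fderiv_eqOn hΩ hp (F := fun q => ⟪ν q, pd1 f q⟫)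
        (G := fun _ => (0 : ℝ)) hccc.nu_f1
      rwa [fderiv_const_apply] at this
    have n3 : ⟪pd1 ν p, pd1 f p⟫ = -(r ^ 2 * κ₁ p) := by
      have h := congrArg (fun L : (ℝ × ℝ) →L[ℝ] ℝ => L (1, 0)) E5
      simp only [ContinuousLinearMap.zero_apply] at h
      rw [fderiv_inner_apply ℝ dν df1 (1, 0)] at h
      have h' : (⟪ν p, pd1 (pd1 f) p⟫ : ℝ) + ⟪pd1 ν p, pd1 f p⟫ = 0 := h
      rw [hccc.h11 p hp] at h'
      linarith
    have n4 : ⟪pd2 ν p, pd1 f p⟫ = 0 := by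
      have h := congrArg (fun L : (ℝ × ℝ) →L[ℝ] ℝ => L (0, 1)) E5
      simp only [ContinuousLinearMap.zero_apply] at h
      rw [fderiv_inner_apply ℝ dν df1 (0, 1)] at h
      have h' : (⟪ν p, pd2 (pd1 f) p⟫ : ℝ) + ⟪pd2 ν p, pd1 f p⟫ = 0 := h
      rw [← hcp, hccc.h12 p hp] at h'
      linarith
    have E6 : fderiv ℝ (fun q => ⟪ν q, pd2 f q⟫) p = 0 := by
      have := fderiv_eqOn hΩ hp (F := fun q => ⟪ν q, pd2 f q⟫)
        (G := fun _ => (0 : ℝ)) hccc.nu_f2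
      rwa [fderiv_const_apply] at this
    have n5 : ⟪pd1 ν p, pd2 f p⟫ = 0 := by
      have h := congrArg (fun L : (ℝ × ℝ) →L[ℝ] ℝ => L (1, 0)) E6
      simp only [ContinuousLinearMap.zero_apply] at h
      rw [fderiv_inner_apply ℝ dν df2 (1, 0)] at h
      have h' : (⟪ν p, pd1 (pd2 f) p⟫ : ℝ) + ⟪pd1 ν p, pd2 f p⟫ = 0 := h
      rw [hccc.h12 p hp] at h'
      linarith
    have n6 : ⟪pd2 ν p, pd2 f p⟫ = -(r ^ 2 * κ₂ p) := by
      have h := congrArg (fun L : (ℝ × ℝ) →L[ℝ] ℝ => L (0, 1)) E6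
      simp only [ContinuousLinearMap.zero_apply] at h
      rw [fderiv_inner_apply ℝ dν df2 (0, 1)] at h
      have h' : (⟪ν p, pd2 (pd2 f) p⟫ : ℝ) + ⟪pd2 ν p, pd2 f p⟫ = 0 := h
      rw [hccc.h22 p hp] at h'
      linarith
    -- frame expansion data
    have hframe := fun (x y : EuclideanSpace ℝ (Fin 3)) =>
      expand3 r hr (pd1 f p) (pd2 f p) (ν p) x y (hccc.g11 p hp) (hccc.g22 p hp)
        (hccc.nu_unit p hp) (hccc.g12 p hp)
        (by rw [real_inner_comm]; exact hccc.nu_f1 p hp)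
        (by rw [real_inner_comm]; exact hccc.nu_f2 p hp)
    -- Weingarten-type expansions
    have i3' : (⟪pd2 f p, pd1 (pd1 f) p⟫ : ℝ) = -(Pv / 2) := by
      rw [real_inner_comm]; exact i3
    have X1 : ⟪pd2 ν p, pd1 (pd1 f) p⟫ = κ₂ p * Pv / 2 := by
      have h := hframe (pd2 ν p) (pd1 (pd1 f) p)
      rw [n4, n6, n2, i1', i3', hccc.h11 p hp] at h
      rw [h]
      field_simp
      ring
    have h12' : (⟪ν p, pd2 (pd1 f) p⟫ : ℝ) = 0 := by
      rw [← hcp]; exact hccc.h12 p hp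
    have X2 : ⟪pd1 ν p, pd2 (pd1 f) p⟫ = -(κ₁ p * Pv / 2) := by
      have h := hframe (pd1 ν p) (pd2 (pd1 f) p)
      rw [n3, n5, n1, i1, i2, h12'] at h
      rw [h]
      field_simp
      ring
    have X3 : ⟪pd2 ν p, pd2 (pd1 f) p⟫ = -(κ₂ p * Pu / 2) := by
      have h := hframe (pd2 ν p) (pd2 (pd1 f) p)
      rw [n4, n6, n2, i1, i2, h12'] at h
      rw [h]
      field_simp
      ring
    have X4 : ⟪pd1 ν p, pd2 (pd2 f) p⟫ = κ₁ p * Pu / 2 := by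
      have h := hframe (pd1 ν p) (pd2 (pd2 f) p)
      rw [n3, n5, n1, i4, i2', hccc.h22 p hp] at h
      rw [h]
      field_simp
      ring
    -- derivative of the `h12`-identity
    have E7 : fderiv ℝ (fun q => ⟪ν q, pd1 (pd2 f) q⟫) p = 0 := by
      have := fderiv_eqOn hΩ hp (F := fun q => ⟪ν q, pd1 (pd2 f) q⟫)
        (G := fun _ => (0 : ℝ)) hccc.h12
      rwa [fderiv_const_apply] at this
    -- Codazzi, direction 2 :  fderiv Q₁ p (0,1) = (κ₁ p + κ₂ p)/2 * Pv
    have Cod1 : fderiv ℝ Q₁ p (0, 1) = (κ₁ p + κ₂ p) / 2 * Pv := by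
      have E8 : fderiv ℝ (fun q => ⟪ν q, pd1 (pd1 f) q⟫) p = fderiv ℝ Q₁ p :=
        fderiv_eqOn hΩ hp (hccc.h11)
      have h := congrArg (fun L : (ℝ × ℝ) →L[ℝ] ℝ => L (0, 1)) E8
      rw [fderiv_inner_apply ℝ dν df11 (0, 1)] at h
      -- third-derivative commutation
      have hthird : pd2 (pd1 (pd1 f)) p = pd1 (pd1 (pd2 f)) p := by
        have s1 : pd1 (pd1 (pd2 f)) p = pd1 (pd2 (pd1 f)) p := by
          show fderiv ℝ (pd1 (pd2 f)) p (1, 0) = fderiv ℝ (pd2 (pd1 f)) p (1, 0)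
          rw [fderiv_eqOn hΩ hp hcommf]
        have s2 : pd1 (pd2 (pd1 f)) p = pd2 (pd1 (pd1 f)) p := pd_comm hΩ hf1 hp
        rw [s1, s2]
      have h7 := congrArg (fun L : (ℝ × ℝ) →L[ℝ] ℝ => L (1, 0)) E7
      simp only [ContinuousLinearMap.zero_apply] at h7
      rw [fderiv_inner_apply ℝ dν db12 (1, 0)] at h7
      -- h : ⟪ν p, pd2 (pd1 (pd1 f)) p⟫ + ⟪pd2 ν p, pd1 (pd1 f) p⟫ = fderiv Q₁ p (0,1)
      -- h7 : ⟪ν p, pd1 (pd1 (pd2 f)) p⟫ + ⟪pd1 ν p, pd1 (pd2 f) p⟫ = 0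
      have h' : (⟪ν p, pd2 (pd1 (pd1 f)) p⟫ : ℝ) + ⟪pd2 ν p, pd1 (pd1 f) p⟫
          = fderiv ℝ Q₁ p (0, 1) := h
      have h7' : (⟪ν p, pd1 (pd1 (pd2 f)) p⟫ : ℝ) + ⟪pd1 ν p, pd1 (pd2 f) p⟫ = 0 := h7
      rw [hthird] at h'
      rw [hcp] at h7'
      rw [X1] at h'
      rw [X2] at h7'
      have : fderiv ℝ Q₁ p (0, 1) = κ₁ p * Pv / 2 + κ₂ p * Pv / 2 := by linarith
      rw [this]; ring
    -- Codazzi, direction 1 :  fderiv Q₂ p (1,0) = (κ₁ p + κ₂ p)/2 * Pu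
    have Cod2 : fderiv ℝ Q₂ p (1, 0) = (κ₁ p + κ₂ p) / 2 * Pu := by
      have E9 : fderiv ℝ (fun q => ⟪ν q, pd2 (pd2 f) q⟫) p = fderiv ℝ Q₂ p :=
        fderiv_eqOn hΩ hp (hccc.h22)
      have h := congrArg (fun L : (ℝ × ℝ) →L[ℝ] ℝ => L (1, 0)) E9
      rw [fderiv_inner_apply ℝ dν df22 (1, 0)] at h
      have hthird : pd1 (pd2 (pd2 f)) p = pd2 (pd1 (pd2 f)) p := pd_comm hΩ hf2 hp
      have h7 := congrArg (fun L : (ℝ × ℝ) →L[ℝ] ℝ => L (0, 1)) E7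
      simp only [ContinuousLinearMap.zero_apply] at h7
      rw [fderiv_inner_apply ℝ dν db12 (0, 1)] at h7
      have h' : (⟪ν p, pd1 (pd2 (pd2 f)) p⟫ : ℝ) + ⟪pd1 ν p, pd2 (pd2 f) p⟫
          = fderiv ℝ Q₂ p (1, 0) := h
      have h7' : (⟪ν p, pd2 (pd1 (pd2 f)) p⟫ : ℝ) + ⟪pd2 ν p, pd1 (pd2 f) p⟫ = 0 := h7
      rw [hthird] at h'
      rw [hcp] at h7'
      rw [X4] at h'
      rw [X3] at h7'
      have : fderiv ℝ Q₂ p (1, 0) = κ₁ p * Pu / 2 + κ₂ p * Pu / 2 := by linarith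
      rw [this]; ring
    -- sum relation : Q₁ + Q₂ = 2H · P on Ω
    have Esum : ∀ v : ℝ × ℝ,
        fderiv ℝ Q₁ p v + fderiv ℝ Q₂ p v = 2 * H * fderiv ℝ P p v := by
      intro v
      have heq : ∀ q ∈ Ω, Q₁ q + Q₂ q = (2 * H) * P q := by
        intro q hq
        have h2 : κ₁ q + κ₂ q = 2 * H := by have := hH q hq; linarith
        show P q * κ₁ q + P q * κ₂ q = (2 * H) * P q
        linear_combination P q * h2
      have E10 : fderiv ℝ (fun q => Q₁ q + Q₂ q) p
          = fderiv ℝ (fun q => (2 * H) * P q) p :=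
        fderiv_eqOn hΩ hp heq
      have lhs : fderiv ℝ (fun q => Q₁ q + Q₂ q) p = fderiv ℝ Q₁ p + fderiv ℝ Q₂ p :=
        fderiv_add dQ₁ dQ₂
      have rhs : fderiv ℝ (fun q => (2 * H) * P q) p = (2 * H) • fderiv ℝ P p :=
        fderiv_const_mul dP (2 * H)
      have := congrArg (fun L : (ℝ × ℝ) →L[ℝ] ℝ => L v) E10
      rw [lhs, rhs] at this
      simpa using this
    have hHp : κ₁ p + κ₂ p = 2 * H := by
      have := hH p hp; linarith
    have cQ₁v : fderiv ℝ Q₁ p (0, 1) = H * Pv := by rw [Cod1, hHp]; ring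
    have cQ₂u : fderiv ℝ Q₂ p (1, 0) = H * Pu := by rw [Cod2, hHp]; ring
    have cQ₂v : fderiv ℝ Q₂ p (0, 1) = H * Pv := by
      have := Esum (0, 1)
      rw [cQ₁v] at this
      rw [← hPv] at this
      linarith
    have cQ₁u : fderiv ℝ Q₁ p (1, 0) = H * Pu := by
      have := Esum (1, 0)
      rw [cQ₂u] at this
      rw [← hPu] at this
      linarith
    -- φ = Q₂ - Q₁
    have hφeq : ∀ q, φ q = Q₂ q - Q₁ q := by
      intro q
      simp only [hφdef, hQ₁def, hQ₂def, hPdef]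
      ring
    have dφ : fderiv ℝ φ p = fderiv ℝ Q₂ p - fderiv ℝ Q₁ p := by
      have : φ = fun q => Q₂ q - Q₁ q := funext hφeq
      rw [this]
      exact fderiv_sub dQ₂ dQ₁
    have hval : ∀ v : ℝ × ℝ, fderiv ℝ φ p v = 0 := by
      intro v
      have hv : v = v.1 • ((1, 0) : ℝ × ℝ) + v.2 • ((0, 1) : ℝ × ℝ) := by
        ext <;> simp
      rw [hv, map_add, map_smul, map_smul, dφ]
      simp only [ContinuousLinearMap.sub_apply]
      rw [cQ₂u, cQ₁u, cQ₂v, cQ₁v]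
      simp
    exact ContinuousLinearMap.ext fun v => hval v
  -- differentiability of φ on Ω
  have hdiff : ∀ p ∈ Ω, DifferentiableAt ℝ φ p := by
    intro p hp
    have dρ : DifferentiableAt ℝ ρ p := diffAt_of_contDiffOn hΩ hccc.smooth_ρ hp
    have dκ₁ : DifferentiableAt ℝ κ₁ p := diffAt_of_contDiffOn hΩ hccc.smooth_κ₁ hp
    have dκ₂ : DifferentiableAt ℝ κ₂ p := diffAt_of_contDiffOn hΩ hccc.smooth_κ₂ hp
    exact (dκ₂.sub dκ₁).mul (dρ.pow 2)
  exact const_of_fderiv_zero hΩ hconn hdiff key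
end

section
/- Let Ω ⊆ ℝ² be open, let f : Ω → ℝ³ be an immersion in conformal curvature coordinates with conformal factor ρ, unit normal ν and principal curvatures κ₁, κ₂, and let u : Ω → ℝ be smooth. For t ∈ ℝ set f(t) := f + t·u·ν, g₁₁(t) := ⟨∂₁f(t), ∂₁f(t)⟩, g₂₂(t) := ⟨∂₂f(t), ∂₂f(t)⟩, g₁₂(t) := ⟨∂₁f(t), ∂₂f(t)⟩, and let J(t) be the 2×2 real matrix (g₁₁(t)g₂₂(t) − g₁₂(t)²)^(−1/2) · [[−g₁₂(t), −g₂₂(t)], [g₁₁(t), g₁₂(t)]]. Then at every point of Ω the map t ↦ J(t) is differentiable at t = 0, with J(0) = [[0, −1], [1, 0]] and J′(0) = [[0, u(κ₂ − κ₁)], [u(κ₂ − κ₁), 0]]. -/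
open scoped RealInnerProductSpace ContDiff

/-- The complex structure matrix `J(t)` of the varied surface `f + t·u·ν`, evaluated
at a point `p`, as a `2 × 2` real matrix. -/
noncomputable def Jmat (f ν : ℝ × ℝ → EuclideanSpace ℝ (Fin 3)) (u : ℝ × ℝ → ℝ)
    (p : ℝ × ℝ) (t : ℝ) : Fin 2 → Fin 2 → ℝ :=
  let ft : ℝ × ℝ → EuclideanSpace ℝ (Fin 3) := fun q => f q + t • (u q • ν q)
  let g11 : ℝ := ⟪pd1 ft p, pd1 ft p⟫
  let g22 : ℝ := ⟪pd2 ft p, pd2 ft p⟫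
  let g12 : ℝ := ⟪pd1 ft p, pd2 ft p⟫
  (g11 * g22 - g12 ^ 2) ^ (-(1 / 2) : ℝ) • ![![-g12, -g22], ![g11, g12]]

open Topology

section Aux

lemma aux_diffAt {F : Type*} [NormedAddCommGroup F] [NormedSpace ℝ F] {Ω : Set (ℝ×ℝ)}
    (hΩ : IsOpen Ω) {g : ℝ×ℝ → F} (hg : ContDiffOn ℝ ∞ g Ω) {p : ℝ×ℝ} (hp : p ∈ Ω) :
    DifferentiableAt ℝ g p :=
  (hg.differentiableOn (by norm_num)).differentiableAt (hΩ.mem_nhds hp)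

lemma aux_fderiv_smooth {F : Type*} [NormedAddCommGroup F] [NormedSpace ℝ F] {Ω : Set (ℝ×ℝ)}
    (hΩ : IsOpen Ω) {g : ℝ×ℝ → F} (hg : ContDiffOn ℝ ∞ g Ω) :
    ContDiffOn ℝ ∞ (fderiv ℝ g) Ω :=
  hg.fderiv_of_isOpen hΩ (by norm_num)

lemma aux_pd_smooth {F : Type*} [NormedAddCommGroup F] [NormedSpace ℝ F] {Ω : Set (ℝ×ℝ)}
    (hΩ : IsOpen Ω) {g : ℝ×ℝ → F} (hg : ContDiffOn ℝ ∞ g Ω) (v : ℝ×ℝ) :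
    ContDiffOn ℝ ∞ (fun q => fderiv ℝ g q v) Ω :=
  (aux_fderiv_smooth hΩ hg).clm_apply contDiffOn_const

lemma fderiv_pd_apply {F : Type*} [NormedAddCommGroup F] [NormedSpace ℝ F] {g : ℝ×ℝ → F}
    {p : ℝ×ℝ} (hg : DifferentiableAt ℝ (fderiv ℝ g) p) (v w : ℝ×ℝ) :
    fderiv ℝ (fun q => fderiv ℝ g q v) p w = fderiv ℝ (fderiv ℝ g) p w v := by
  have h : HasFDerivAt (fun q => fderiv ℝ g q v)
      ((ContinuousLinearMap.apply ℝ F v).comp (fderiv ℝ (fderiv ℝ g) p)) p :=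
    (ContinuousLinearMap.apply ℝ F v).hasFDerivAt.comp p hg.hasFDerivAt
  rw [h.fderiv]; rfl

lemma pd_symm {F : Type*} [NormedAddCommGroup F] [NormedSpace ℝ F] {Ω : Set (ℝ×ℝ)}
    (hΩ : IsOpen Ω) {g : ℝ×ℝ → F} (hg : ContDiffOn ℝ ∞ g Ω) {p : ℝ×ℝ} (hp : p ∈ Ω) :
    pd2 (pd1 g) p = pd1 (pd2 g) p := by
  have hdiff : DifferentiableAt ℝ (fderiv ℝ g) p := aux_diffAt hΩ (aux_fderiv_smooth hΩ hg) hp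
  have hev : ∀ᶠ y in 𝓝 p, HasFDerivAt g (fderiv ℝ g y) y :=
    Filter.eventually_of_mem (hΩ.mem_nhds hp) fun y hy => (aux_diffAt hΩ hg hy).hasFDerivAt
  have hsym := second_derivative_symmetric_of_eventually hev hdiff.hasFDerivAt
    ((0:ℝ),(1:ℝ)) ((1:ℝ),(0:ℝ))
  show fderiv ℝ (fun q => fderiv ℝ g q (1,0)) p (0,1)
      = fderiv ℝ (fun q => fderiv ℝ g q (0,1)) p (1,0)
  rw [fderiv_pd_apply hdiff, fderiv_pd_apply hdiff, hsym]

lemma inner_deriv_zero {Ω : Set (ℝ×ℝ)} (hΩ : IsOpen Ω)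
    {g h : ℝ×ℝ → EuclideanSpace ℝ (Fin 3)} {p : ℝ×ℝ} (hp : p ∈ Ω)
    (dg : DifferentiableAt ℝ g p) (dh : DifferentiableAt ℝ h p)
    (hzero : ∀ q ∈ Ω, ⟪g q, h q⟫ = (0:ℝ)) (v : ℝ×ℝ) :
    ⟪g p, fderiv ℝ h p v⟫ + ⟪fderiv ℝ g p v, h p⟫ = 0 := by
  have hF := dg.hasFDerivAt.inner ℝ dh.hasFDerivAt
  have heq : (fun q => ⟪g q, h q⟫) =ᶠ[𝓝 p] fun _ => (0:ℝ) :=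
    Filter.eventuallyEq_of_mem (hΩ.mem_nhds hp) hzero
  have h0 : fderiv ℝ (fun q => ⟪g q, h q⟫) p = 0 := by
    rw [heq.fderiv_eq]; exact fderiv_const_apply 0
  rw [hF.fderiv] at h0
  have h2 := ContinuousLinearMap.ext_iff.1 h0 v
  simpa [fderivInnerCLM] using h2

lemma quadDeriv (c0 c1 c2 : ℝ) : HasDerivAt (fun t : ℝ => c0 + c1 * t + c2 * t^2) c1 0 := by
  have h : HasDerivAt (fun t : ℝ => c0 + c1 * t + c2 * t^2) _ 0 := ((hasDerivAt_const (0:ℝ) c0).add ((hasDerivAt_id (0:ℝ)).const_mul c1)).add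
    ((hasDerivAt_pow 2 (0:ℝ)).const_mul c2)
  simpa using h

lemma rpow4 (r : ℝ) : (r^2*r^2 : ℝ) = r ^ (4:ℝ) := by
  rw [show ((4:ℝ)) = ((4:ℕ):ℝ) by norm_num, Real.rpow_natCast r 4]; ring

lemma rpowA {r : ℝ} (hr : 0 < r) : (r^2*r^2 : ℝ) ^ (-(1/2):ℝ) = (r^2)⁻¹ := by
  rw [rpow4 r, ← Real.rpow_mul hr.le, show ((4:ℝ) * (-(1/2)) : ℝ) = -((2:ℕ):ℝ) by norm_num,
    Real.rpow_neg hr.le, Real.rpow_natCast]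

lemma rpowB {r : ℝ} (hr : 0 < r) : (r^2*r^2 : ℝ) ^ ((-(1/2):ℝ) - 1) = (r^6)⁻¹ := by
  rw [rpow4 r, ← Real.rpow_mul hr.le, show ((4:ℝ) * ((-(1/2)) - 1) : ℝ) = -((6:ℕ):ℝ) by norm_num,
    Real.rpow_neg hr.le, Real.rpow_natCast]

lemma entry_deriv {D e : ℝ → ℝ} {Dd ed c : ℝ} (hD : HasDerivAt D Dd 0) (he : HasDerivAt e ed 0)
    (hD0 : D 0 ≠ 0)
    (hc : Dd * (-(1/2)) * (D 0) ^ ((-(1/2):ℝ) - 1) * e 0 + (D 0) ^ (-(1/2):ℝ) * ed = c) :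
    HasDerivAt (fun t => D t ^ (-(1/2):ℝ) * e t) c 0 := by
  have h := (hD.rpow_const (p := (-(1/2):ℝ)) (Or.inl hD0)).mul he
  rwa [hc] at h

lemma Jfun_facts (r k1 k2 uu B Ec Fc : ℝ) (hr : 0 < r)
    (G : ℝ → Fin 2 → Fin 2 → ℝ)
    (hG : G = fun t : ℝ =>
      (((r^2 + (-(2*(uu*r^2*k1)))*t + B*t^2) * (r^2 + (-(2*(uu*r^2*k2)))*t + Ec*t^2)
        - (0 + 0*t + Fc*t^2)^2) ^ (-(1/2):ℝ)) •
      ![![-(0 + 0*t + Fc*t^2), -(r^2 + (-(2*(uu*r^2*k2)))*t + Ec*t^2)],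
        ![r^2 + (-(2*(uu*r^2*k1)))*t + B*t^2, 0 + 0*t + Fc*t^2]]) :
    G 0 = ![![0,-1],![1,0]] ∧
    HasDerivAt G ![![0, uu*(k2-k1)], ![uu*(k2-k1), 0]] 0 := by
  subst hG
  have hr2 : r^2 ≠ 0 := by positivity
  constructor
  · funext i j
    fin_cases i <;> fin_cases j <;>
      norm_num [Pi.smul_apply, smul_eq_mul, rpowA hr] <;> field_simp
  · have hD : HasDerivAt (fun t : ℝ =>
        (r^2 + (-(2*(uu*r^2*k1)))*t + B*t^2) * (r^2 + (-(2*(uu*r^2*k2)))*t + Ec*t^2)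
          - (0 + 0*t + Fc*t^2)^2)
        (((-(2*(uu*r^2*k1))) * (r^2 + (-(2*(uu*r^2*k2)))*0 + Ec*0^2)
          + (r^2 + (-(2*(uu*r^2*k1)))*0 + B*0^2) * (-(2*(uu*r^2*k2))))
          - 2 * (0 + 0*0 + Fc*0^2) ^ 1 * 0) 0 :=
      ((quadDeriv _ _ _).mul (quadDeriv _ _ _)).sub ((quadDeriv 0 0 Fc).pow 2)
    have hD0 : ((r^2 + (-(2*(uu*r^2*k1)))*0 + B*0^2) * (r^2 + (-(2*(uu*r^2*k2)))*0 + Ec*0^2)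
          - (0 + 0*0 + Fc*0^2)^2) ≠ 0 := by norm_num; positivity
    refine hasDerivAt_pi.2 fun i => hasDerivAt_pi.2 fun j => ?_
    fin_cases i <;> fin_cases j <;>
      simp only [Pi.smul_apply, smul_eq_mul, Matrix.cons_val', Matrix.cons_val_zero,
        Matrix.cons_val_one, Matrix.head_cons, Matrix.head_fin_const, Matrix.cons_val_fin_one,
        Matrix.empty_val', Fin.zero_eta, Fin.mk_one]
    · refine entry_deriv hD ((quadDeriv 0 0 Fc).neg) hD0 ?_
      norm_num
    · refine entry_deriv hD ((quadDeriv _ _ _).neg) hD0 ?_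
      rw [show ((r^2 + (-(2*(uu*r^2*k1)))*0 + B*0^2) * (r^2 + (-(2*(uu*r^2*k2)))*0 + Ec*0^2)
          - (0 + 0*0 + Fc*0^2)^2 : ℝ) = r^2*r^2 by ring, rpowA hr, rpowB hr]
      field_simp
      ring
    · refine entry_deriv hD (quadDeriv _ _ _) hD0 ?_
      rw [show ((r^2 + (-(2*(uu*r^2*k1)))*0 + B*0^2) * (r^2 + (-(2*(uu*r^2*k2)))*0 + Ec*0^2)
          - (0 + 0*0 + Fc*0^2)^2 : ℝ) = r^2*r^2 by ring, rpowA hr, rpowB hr]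
      field_simp
      ring
    · refine entry_deriv hD (quadDeriv 0 0 Fc) hD0 ?_
      norm_num

end Aux


/-- The first variation of the complex structure: `J(0) = J₀` and
`J'(0) = J₁ = [[0, uκ], [uκ, 0]]` with `κ = κ₂ - κ₁`. -/
theorem complex_structure_first_variation (Ω : Set (ℝ × ℝ)) (hΩ : IsOpen Ω)
    (f ν : ℝ × ℝ → EuclideanSpace ℝ (Fin 3)) (ρ κ₁ κ₂ : ℝ × ℝ → ℝ)
    (hccc : IsCCC Ω f ν ρ κ₁ κ₂)
    (u : ℝ × ℝ → ℝ) (hu : ContDiffOn ℝ ∞ u Ω) :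
    ∀ p ∈ Ω,
      Jmat f ν u p 0 = ![![0, -1], ![1, 0]] ∧
      HasDerivAt (Jmat f ν u p)
        ![![0, u p * (κ₂ p - κ₁ p)], ![u p * (κ₂ p - κ₁ p), 0]] 0 := by
  intro p hp
  have dF : DifferentiableAt ℝ f p := aux_diffAt hΩ hccc.smooth_f hp
  have dν : DifferentiableAt ℝ ν p := aux_diffAt hΩ hccc.smooth_ν hp
  have du : DifferentiableAt ℝ u p := aux_diffAt hΩ hu hp
  have dW : DifferentiableAt ℝ (fun q => u q • ν q) p :=
    aux_diffAt hΩ (hu.smul hccc.smooth_ν) hp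
  have dpd1f : DifferentiableAt ℝ (pd1 f) p :=
    aux_diffAt hΩ (aux_pd_smooth hΩ hccc.smooth_f (1,0)) hp
  have dpd2f : DifferentiableAt ℝ (pd2 f) p :=
    aux_diffAt hΩ (aux_pd_smooth hΩ hccc.smooth_f (0,1)) hp
  -- first variations of the tangent vectors
  have hft1 : ∀ t : ℝ, pd1 (fun q => f q + t • (u q • ν q)) p
      = pd1 f p + t • pd1 (fun q => u q • ν q) p := by
    intro t
    have h : HasFDerivAt (fun q => f q + t • (u q • ν q))
        (fderiv ℝ f p + t • fderiv ℝ (fun q => u q • ν q) p) p :=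
      dF.hasFDerivAt.add (dW.hasFDerivAt.const_smul t)
    simp only [pd1]
    rw [h.fderiv]
    simp
  have hft2 : ∀ t : ℝ, pd2 (fun q => f q + t • (u q • ν q)) p
      = pd2 f p + t • pd2 (fun q => u q • ν q) p := by
    intro t
    have h : HasFDerivAt (fun q => f q + t • (u q • ν q))
        (fderiv ℝ f p + t • fderiv ℝ (fun q => u q • ν q) p) p :=
      dF.hasFDerivAt.add (dW.hasFDerivAt.const_smul t)
    simp only [pd2]
    rw [h.fderiv]
    simp
  -- derivatives of the normal
  have inner1 : ⟪pd1 ν p, pd1 f p⟫ = -(ρ p^2 * κ₁ p) := by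
    have h := inner_deriv_zero hΩ hp dν dpd1f hccc.nu_f1 (1,0)
    have h11 := hccc.h11 p hp
    simp only [pd1] at h h11 ⊢
    linarith
  have inner2 : ⟪pd2 ν p, pd1 f p⟫ = 0 := by
    have h := inner_deriv_zero hΩ hp dν dpd1f hccc.nu_f1 (0,1)
    have hsym := pd_symm hΩ hccc.smooth_f hp
    have h12 := hccc.h12 p hp
    rw [show fderiv ℝ (pd1 f) p (0,1) = pd2 (pd1 f) p from rfl, hsym, h12] at h
    simp only [pd2] at h ⊢
    linarith
  have inner3 : ⟪pd1 ν p, pd2 f p⟫ = 0 := by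
    have h := inner_deriv_zero hΩ hp dν dpd2f hccc.nu_f2 (1,0)
    have h12 := hccc.h12 p hp
    rw [show fderiv ℝ (pd2 f) p (1,0) = pd1 (pd2 f) p from rfl, h12] at h
    simp only [pd1] at h ⊢
    linarith
  have inner4 : ⟪pd2 ν p, pd2 f p⟫ = -(ρ p^2 * κ₂ p) := by
    have h := inner_deriv_zero hΩ hp dν dpd2f hccc.nu_f2 (0,1)
    have h22 := hccc.h22 p hp
    simp only [pd2] at h h22 ⊢
    linarith
  -- expansions of the variation vector fields
  have hw : pd1 (fun q => u q • ν q) p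
      = u p • pd1 ν p + (fderiv ℝ u p (1,0)) • ν p := by
    have h : HasFDerivAt (fun q => u q • ν q) _ p := du.hasFDerivAt.smul dν.hasFDerivAt
    simp only [pd1]
    rw [h.fderiv]
    simp
  have hz : pd2 (fun q => u q • ν q) p
      = u p • pd2 ν p + (fderiv ℝ u p (0,1)) • ν p := by
    have h : HasFDerivAt (fun q => u q • ν q) _ p := du.hasFDerivAt.smul dν.hasFDerivAt
    simp only [pd2]
    rw [h.fderiv]
    simp
  -- inner products of tangent vectors with the variation fields
  have hfn1 : ⟪pd1 f p, ν p⟫ = 0 := by rw [real_inner_comm]; exact hccc.nu_f1 p hp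
  have hfn2 : ⟪pd2 f p, ν p⟫ = 0 := by rw [real_inner_comm]; exact hccc.nu_f2 p hp
  have iaw : ⟪pd1 f p, pd1 (fun q => u q • ν q) p⟫ = -(u p * ρ p^2 * κ₁ p) := by
    rw [hw, inner_add_right, real_inner_smul_right, real_inner_smul_right, hfn1,
      real_inner_comm, inner1]
    ring
  have ibw : ⟪pd2 f p, pd1 (fun q => u q • ν q) p⟫ = 0 := by
    rw [hw, inner_add_right, real_inner_smul_right, real_inner_smul_right, hfn2,
      real_inner_comm, inner3]
    ring
  have iaz : ⟪pd1 f p, pd2 (fun q => u q • ν q) p⟫ = 0 := by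
    rw [hz, inner_add_right, real_inner_smul_right, real_inner_smul_right, hfn1,
      real_inner_comm, inner2]
    ring
  have ibz : ⟪pd2 f p, pd2 (fun q => u q • ν q) p⟫ = -(u p * ρ p^2 * κ₂ p) := by
    rw [hz, inner_add_right, real_inner_smul_right, real_inner_smul_right, hfn2,
      real_inner_comm, inner4]
    ring
  -- the explicit form of the metric coefficients
  have hJ : ∀ t : ℝ, Jmat f ν u p t = (fun t : ℝ =>
      (((ρ p^2 + (-(2*(u p*ρ p^2*κ₁ p)))*t
            + ⟪pd1 (fun q => u q • ν q) p, pd1 (fun q => u q • ν q) p⟫*t^2)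
        * (ρ p^2 + (-(2*(u p*ρ p^2*κ₂ p)))*t
            + ⟪pd2 (fun q => u q • ν q) p, pd2 (fun q => u q • ν q) p⟫*t^2)
        - (0 + 0*t + ⟪pd1 (fun q => u q • ν q) p, pd2 (fun q => u q • ν q) p⟫*t^2)^2)
          ^ (-(1/2):ℝ)) •
      ![![-(0 + 0*t + ⟪pd1 (fun q => u q • ν q) p, pd2 (fun q => u q • ν q) p⟫*t^2),
          -(ρ p^2 + (-(2*(u p*ρ p^2*κ₂ p)))*t
            + ⟪pd2 (fun q => u q • ν q) p, pd2 (fun q => u q • ν q) p⟫*t^2)],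
        ![ρ p^2 + (-(2*(u p*ρ p^2*κ₁ p)))*t
            + ⟪pd1 (fun q => u q • ν q) p, pd1 (fun q => u q • ν q) p⟫*t^2,
          0 + 0*t + ⟪pd1 (fun q => u q • ν q) p, pd2 (fun q => u q • ν q) p⟫*t^2]]) t := by
    intro t
    have e11 : ⟪pd1 f p + t • pd1 (fun q => u q • ν q) p,
        pd1 f p + t • pd1 (fun q => u q • ν q) p⟫
        = ρ p^2 + (-(2*(u p*ρ p^2*κ₁ p)))*t
            + ⟪pd1 (fun q => u q • ν q) p, pd1 (fun q => u q • ν q) p⟫*t^2 := by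
      rw [real_inner_add_add_self, real_inner_smul_right, real_inner_smul_left,
        real_inner_smul_right, hccc.g11 p hp, iaw]
      ring
    have e22 : ⟪pd2 f p + t • pd2 (fun q => u q • ν q) p,
        pd2 f p + t • pd2 (fun q => u q • ν q) p⟫
        = ρ p^2 + (-(2*(u p*ρ p^2*κ₂ p)))*t
            + ⟪pd2 (fun q => u q • ν q) p, pd2 (fun q => u q • ν q) p⟫*t^2 := by
      rw [real_inner_add_add_self, real_inner_smul_right, real_inner_smul_left,
        real_inner_smul_right, hccc.g22 p hp, ibz]
      ring
    have e12 : ⟪pd1 f p + t • pd1 (fun q => u q • ν q) p,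
        pd2 f p + t • pd2 (fun q => u q • ν q) p⟫
        = 0 + 0*t + ⟪pd1 (fun q => u q • ν q) p, pd2 (fun q => u q • ν q) p⟫*t^2 := by
      rw [inner_add_left, inner_add_right, inner_add_right, real_inner_smul_left,
        real_inner_smul_left, real_inner_smul_right, real_inner_smul_right,
        hccc.g12 p hp, iaz, show (inner ℝ (pd1 (fun q => u q • ν q) p) (pd2 f p) : ℝ) = 0 from
          (real_inner_comm _ _).trans ibw]
      ring
    simp only [Jmat]
    rw [hft1 t, hft2 t, e11, e22, e12]
  exact Jfun_facts (ρ p) (κ₁ p) (κ₂ p) (u p)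
    ⟪pd1 (fun q => u q • ν q) p, pd1 (fun q => u q • ν q) p⟫
    ⟪pd2 (fun q => u q • ν q) p, pd2 (fun q => u q • ν q) p⟫
    ⟪pd1 (fun q => u q • ν q) p, pd2 (fun q => u q • ν q) p⟫
    (hccc.ρ_pos p hp) (Jmat f ν u p) (funext hJ)
end

section
/- Let Ω ⊆ ℝ² be open and connected, and let f : Ω → ℝ³ be an immersion in conformal curvature coordinates with conformal factor ρ, unit normal ν and principal curvatures κ₁, κ₂, such that κ₁ + κ₂ is constant on Ω. Then the Weingarten relations ∂₁ν = −κ₁∂₁f and ∂₂ν = −κ₂∂₂f hold on Ω, and the unit normal satisfies the Jacobi equation: ∂₁∂₁ν + ∂₂∂₂ν = −ρ²(κ₁² + κ₂²)·ν on Ω. -/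
open scoped RealInnerProductSpace ContDiff

section Helpers

variable {E : Type*} [NormedAddCommGroup E] [NormedSpace ℝ E]
variable {Ω : Set (ℝ × ℝ)} {p d : ℝ × ℝ}

lemma diffAt_of (hΩ : IsOpen Ω) {g : ℝ × ℝ → E} (hg : ContDiffOn ℝ ∞ g Ω) (hp : p ∈ Ω) :
    DifferentiableAt ℝ g p :=
  (hg.contDiffAt (hΩ.mem_nhds hp)).differentiableAt (by norm_cast)

lemma fd_congr_on (hΩ : IsOpen Ω) (hp : p ∈ Ω) {g h : ℝ × ℝ → E}
    (hgh : ∀ q ∈ Ω, g q = h q) : fderiv ℝ g p = fderiv ℝ h p := by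
  apply Filter.EventuallyEq.fderiv_eq
  filter_upwards [hΩ.mem_nhds hp] with q hq using hgh q hq

lemma fd_const_on (hΩ : IsOpen Ω) (hp : p ∈ Ω) {g : ℝ × ℝ → E} {c : E}
    (hgc : ∀ q ∈ Ω, g q = c) : fderiv ℝ g p d = 0 := by
  rw [fd_congr_on hΩ hp (h := fun _ => c) hgc]
  simp

lemma fd_inner {F : Type*} [NormedAddCommGroup F] [InnerProductSpace ℝ F]
    {u v : ℝ × ℝ → F} (hu : DifferentiableAt ℝ u p) (hv : DifferentiableAt ℝ v p) :
    fderiv ℝ (fun q => ⟪u q, v q⟫) p d = ⟪fderiv ℝ u p d, v p⟫ + ⟪u p, fderiv ℝ v p d⟫ := by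
  rw [fderiv_inner_apply ℝ hu hv, add_comm]

lemma fd_smul {a : ℝ × ℝ → ℝ} {w : ℝ × ℝ → E} (ha : DifferentiableAt ℝ a p)
    (hw : DifferentiableAt ℝ w p) :
    fderiv ℝ (fun q => a q • w q) p d = fderiv ℝ a p d • w p + a p • fderiv ℝ w p d := by
  have := congrArg (fun L : (ℝ × ℝ) →L[ℝ] E => L d) (fderiv_smul ha hw)
  simp only [ContinuousLinearMap.add_apply, ContinuousLinearMap.smul_apply,
    ContinuousLinearMap.smulRight_apply] at this
  exact this.trans (add_comm _ _)

lemma fd_mul {a b : ℝ × ℝ → ℝ} (ha : DifferentiableAt ℝ a p) (hb : DifferentiableAt ℝ b p) :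
    fderiv ℝ (fun q => a q * b q) p d = fderiv ℝ a p d * b p + a p * fderiv ℝ b p d := by
  have := congrArg (fun L : (ℝ × ℝ) →L[ℝ] ℝ => L d) (fderiv_mul ha hb)
  simp only [ContinuousLinearMap.add_apply, ContinuousLinearMap.smul_apply,
    smul_eq_mul] at this
  rw [show (fun q => a q * b q) = a * b from rfl, this]; ring

lemma fd_add {g h : ℝ × ℝ → E} (hg : DifferentiableAt ℝ g p) (hh : DifferentiableAt ℝ h p) :
    fderiv ℝ (fun q => g q + h q) p d = fderiv ℝ g p d + fderiv ℝ h p d := by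
  rw [show (fun q => g q + h q) = g + h from rfl, fderiv_add hg hh]; rfl

lemma fd_neg {g : ℝ × ℝ → E} :
    fderiv ℝ (fun q => -(g q)) p d = -(fderiv ℝ g p d) := by
  rw [show (fun q => -(g q)) = -g from rfl, fderiv_neg]; rfl

lemma contDiffOn_fd (hΩ : IsOpen Ω) {g : ℝ × ℝ → E} (hg : ContDiffOn ℝ ∞ g Ω) (d : ℝ × ℝ) :
    ContDiffOn ℝ ∞ (fun q => fderiv ℝ g q d) Ω :=
  (hg.fderiv_of_isOpen hΩ le_rfl).clm_apply contDiffOn_const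

lemma fd_swap (hΩ : IsOpen Ω) {g : ℝ × ℝ → E} (hg : ContDiffOn ℝ ∞ g Ω) (hp : p ∈ Ω)
    (d₁ d₂ : ℝ × ℝ) :
    fderiv ℝ (fun q => fderiv ℝ g q d₁) p d₂ = fderiv ℝ (fun q => fderiv ℝ g q d₂) p d₁ := by
  have hd : DifferentiableAt ℝ (fderiv ℝ g) p :=
    diffAt_of hΩ (hg.fderiv_of_isOpen hΩ le_rfl) hp
  have hs : IsSymmSndFDerivAt ℝ g p :=
    (hg.contDiffAt (hΩ.mem_nhds hp)).isSymmSndFDerivAt (by rw [minSmoothness_of_isRCLikeNormedField]; norm_cast)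
  have h1 : ∀ e₁ e₂ : ℝ × ℝ, fderiv ℝ (fun q => fderiv ℝ g q e₁) p e₂
      = fderiv ℝ (fderiv ℝ g) p e₂ e₁ := by
    intro e₁ e₂
    rw [fderiv_clm_apply hd (differentiableAt_const _)]
    simp
  rw [h1, h1, hs.eq]

end Helpers

lemma frame_decomp {e1 e2 n w : EuclideanSpace ℝ (Fin 3)} {r a b c : ℝ} (hr : 0 < r)
    (h11 : ⟪e1, e1⟫ = r ^ 2) (h22 : ⟪e2, e2⟫ = r ^ 2) (h12 : ⟪e1, e2⟫ = 0)
    (hnn : ⟪n, n⟫ = 1) (hn1 : ⟪n, e1⟫ = 0) (hn2 : ⟪n, e2⟫ = 0)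
    (hw1 : ⟪w, e1⟫ = a * r ^ 2) (hw2 : ⟪w, e2⟫ = b * r ^ 2) (hwn : ⟪w, n⟫ = c) :
    w = a • e1 + b • e2 + c • n := by
  have he1 : e1 ≠ 0 := by
    intro h; rw [h, inner_zero_left] at h11; nlinarith
  have he2 : e2 ≠ 0 := by
    intro h; rw [h, inner_zero_left] at h22; nlinarith
  have hn0 : n ≠ 0 := by
    intro h; rw [h, inner_zero_left] at hnn; norm_num at hnn
  set v : Fin 3 → EuclideanSpace ℝ (Fin 3) := ![e1, e2, n] with hv
  have hli : LinearIndependent ℝ v := by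
    apply linearIndependent_of_ne_zero_of_inner_eq_zero
    · intro i; fin_cases i <;> simpa [hv]
    · intro i j hij
      fin_cases i <;> fin_cases j <;> simp only [hv, Fin.zero_eta, Fin.mk_one,
          Matrix.cons_val_zero, Matrix.cons_val_one, Matrix.head_cons,
          Matrix.cons_val_two, Matrix.tail_cons, Fin.isValue, Fin.reduceFinMk] <;>
        first
          | exact absurd rfl hij
          | exact h12
          | exact hn1
          | exact hn2
          | (rw [real_inner_comm]; first | exact h12 | exact hn1 | exact hn2)
  have hspan : Submodule.span ℝ (Set.range v) = ⊤ :=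
    hli.span_eq_top_of_card_eq_finrank (by simp)
  set w' := w - (a • e1 + b • e2 + c • n) with hw'
  have hkey : ∀ u ∈ Submodule.span ℝ (Set.range v), ⟪w', u⟫ = 0 := by
    intro u hu
    induction hu using Submodule.span_induction with
    | mem x hx =>
      obtain ⟨i, rfl⟩ := hx
      fin_cases i <;>
        simp only [hv, Fin.zero_eta, Fin.mk_one, Matrix.cons_val_zero, Matrix.cons_val_one,
          Matrix.head_cons, Matrix.cons_val_two, Matrix.tail_cons, Fin.isValue, Fin.reduceFinMk, hw',
          inner_sub_left, inner_add_left, real_inner_smul_left]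
      · rw [hw1, h11, real_inner_comm e1 e2, h12, hn1]; ring
      · rw [hw2, h22, h12, hn2]; ring
      · rw [hwn, real_inner_comm n e1, hn1, real_inner_comm n e2, hn2, hnn]; ring
    | zero => simp
    | add x y _ _ hx hy => rw [inner_add_right, hx, hy, add_zero]
    | smul t x _ hx => rw [real_inner_smul_right, hx, mul_zero]
  have hw0 : w' = 0 := by
    have : w' ∈ (⊤ : Submodule ℝ (EuclideanSpace ℝ (Fin 3)))ᗮ := by
      rw [← hspan]
      exact (Submodule.mem_orthogonal' _ _).2 hkey
    rwa [Submodule.top_orthogonal_eq_bot, Submodule.mem_bot] at this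
  have := sub_eq_zero.mp hw0
  exact this

section Wrappers

variable {E : Type*} [NormedAddCommGroup E] [NormedSpace ℝ E]
variable {F : Type*} [NormedAddCommGroup F] [InnerProductSpace ℝ F]
variable {Ω : Set (ℝ × ℝ)} {p : ℝ × ℝ}

lemma pd1_congr (hΩ : IsOpen Ω) (hp : p ∈ Ω) {g h : ℝ × ℝ → E}
    (hgh : ∀ q ∈ Ω, g q = h q) : pd1 g p = pd1 h p :=
  congrArg (fun L : (ℝ × ℝ) →L[ℝ] E => L (1, 0)) (fd_congr_on hΩ hp hgh)

lemma pd2_congr (hΩ : IsOpen Ω) (hp : p ∈ Ω) {g h : ℝ × ℝ → E}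
    (hgh : ∀ q ∈ Ω, g q = h q) : pd2 g p = pd2 h p :=
  congrArg (fun L : (ℝ × ℝ) →L[ℝ] E => L (0, 1)) (fd_congr_on hΩ hp hgh)

lemma pd1_const_on (hΩ : IsOpen Ω) (hp : p ∈ Ω) {g : ℝ × ℝ → E} {c : E}
    (hgc : ∀ q ∈ Ω, g q = c) : pd1 g p = 0 := fd_const_on hΩ hp hgc

lemma pd2_const_on (hΩ : IsOpen Ω) (hp : p ∈ Ω) {g : ℝ × ℝ → E} {c : E}
    (hgc : ∀ q ∈ Ω, g q = c) : pd2 g p = 0 := fd_const_on hΩ hp hgc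

lemma pd1_inner {u v : ℝ × ℝ → F} (hu : DifferentiableAt ℝ u p) (hv : DifferentiableAt ℝ v p) :
    pd1 (fun q => ⟪u q, v q⟫) p = ⟪pd1 u p, v p⟫ + ⟪u p, pd1 v p⟫ := fd_inner hu hv

lemma pd2_inner {u v : ℝ × ℝ → F} (hu : DifferentiableAt ℝ u p) (hv : DifferentiableAt ℝ v p) :
    pd2 (fun q => ⟪u q, v q⟫) p = ⟪pd2 u p, v p⟫ + ⟪u p, pd2 v p⟫ := fd_inner hu hv

lemma pd1_smul {a : ℝ × ℝ → ℝ} {w : ℝ × ℝ → E} (ha : DifferentiableAt ℝ a p)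
    (hw : DifferentiableAt ℝ w p) :
    pd1 (fun q => a q • w q) p = pd1 a p • w p + a p • pd1 w p := fd_smul ha hw

lemma pd2_smul {a : ℝ × ℝ → ℝ} {w : ℝ × ℝ → E} (ha : DifferentiableAt ℝ a p)
    (hw : DifferentiableAt ℝ w p) :
    pd2 (fun q => a q • w q) p = pd2 a p • w p + a p • pd2 w p := fd_smul ha hw

lemma pd1_mul {a b : ℝ × ℝ → ℝ} (ha : DifferentiableAt ℝ a p) (hb : DifferentiableAt ℝ b p) :
    pd1 (fun q => a q * b q) p = pd1 a p * b p + a p * pd1 b p := fd_mul ha hb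

lemma pd2_mul {a b : ℝ × ℝ → ℝ} (ha : DifferentiableAt ℝ a p) (hb : DifferentiableAt ℝ b p) :
    pd2 (fun q => a q * b q) p = pd2 a p * b p + a p * pd2 b p := fd_mul ha hb

lemma pd1_add {g h : ℝ × ℝ → E} (hg : DifferentiableAt ℝ g p) (hh : DifferentiableAt ℝ h p) :
    pd1 (fun q => g q + h q) p = pd1 g p + pd1 h p := fd_add hg hh

lemma pd2_add {g h : ℝ × ℝ → E} (hg : DifferentiableAt ℝ g p) (hh : DifferentiableAt ℝ h p) :
    pd2 (fun q => g q + h q) p = pd2 g p + pd2 h p := fd_add hg hh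

lemma pd1_neg {g : ℝ × ℝ → E} : pd1 (fun q => -(g q)) p = -(pd1 g p) := fd_neg

lemma pd2_neg {g : ℝ × ℝ → E} : pd2 (fun q => -(g q)) p = -(pd2 g p) := fd_neg

lemma contDiffOn_pd1 (hΩ : IsOpen Ω) {g : ℝ × ℝ → E} (hg : ContDiffOn ℝ ∞ g Ω) :
    ContDiffOn ℝ ∞ (pd1 g) Ω := contDiffOn_fd hΩ hg (1, 0)

lemma contDiffOn_pd2 (hΩ : IsOpen Ω) {g : ℝ × ℝ → E} (hg : ContDiffOn ℝ ∞ g Ω) :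
    ContDiffOn ℝ ∞ (pd2 g) Ω := contDiffOn_fd hΩ hg (0, 1)

lemma pdsymm (hΩ : IsOpen Ω) {g : ℝ × ℝ → E} (hg : ContDiffOn ℝ ∞ g Ω) (hp : p ∈ Ω) :
    pd1 (pd2 g) p = pd2 (pd1 g) p := fd_swap hΩ hg hp (0, 1) (1, 0)

end Wrappers

/-- For a CMC immersion in conformal curvature coordinates on an open
connected domain, the Weingarten relations hold and the unit normal satisfies the
Jacobi equation `Δ₀ν = −ρ²(κ₁² + κ₂²)ν`. -/
theorem normal_satisfies_jacobi (Ω : Set (ℝ × ℝ)) (hΩ : IsOpen Ω) (hconn : IsConnected Ω)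
    (f ν : ℝ × ℝ → EuclideanSpace ℝ (Fin 3)) (ρ κ₁ κ₂ : ℝ × ℝ → ℝ)
    (hccc : IsCCC Ω f ν ρ κ₁ κ₂)
    (hH : ∃ c : ℝ, ∀ p ∈ Ω, κ₁ p + κ₂ p = c) :
    ∀ p ∈ Ω,
      pd1 ν p = -(κ₁ p • pd1 f p) ∧
      pd2 ν p = -(κ₂ p • pd2 f p) ∧
      pd1 (pd1 ν) p + pd2 (pd2 ν) p = (-(ρ p ^ 2 * (κ₁ p ^ 2 + κ₂ p ^ 2))) • ν p := by
  obtain ⟨cH, hcH⟩ := hH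
  obtain ⟨sf, sρ, sν, sκ₁, sκ₂, ρpos, g11, g22, g12, nuu, nf1, nf2, h12, h11, h22⟩ := hccc
  have dν : ∀ q ∈ Ω, DifferentiableAt ℝ ν q := fun q hq => diffAt_of hΩ sν hq
  have dρ : ∀ q ∈ Ω, DifferentiableAt ℝ ρ q := fun q hq => diffAt_of hΩ sρ hq
  have dκ₁ : ∀ q ∈ Ω, DifferentiableAt ℝ κ₁ q := fun q hq => diffAt_of hΩ sκ₁ hq
  have dκ₂ : ∀ q ∈ Ω, DifferentiableAt ℝ κ₂ q := fun q hq => diffAt_of hΩ sκ₂ hq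
  have dpd1f : ∀ q ∈ Ω, DifferentiableAt ℝ (pd1 f) q :=
    fun q hq => diffAt_of hΩ (contDiffOn_pd1 hΩ sf) hq
  have dpd2f : ∀ q ∈ Ω, DifferentiableAt ℝ (pd2 f) q :=
    fun q hq => diffAt_of hΩ (contDiffOn_pd2 hΩ sf) hq
  -- Weingarten relations
  have W1 : ∀ q ∈ Ω, pd1 ν q = -(κ₁ q • pd1 f q) := by
    intro p hp
    have A1 : ⟪pd1 ν p, ν p⟫ = 0 := by
      have h0 : pd1 (fun q => ⟪ν q, ν q⟫) p = 0 := pd1_const_on hΩ hp nuu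
      rw [pd1_inner (dν p hp) (dν p hp)] at h0
      have hc := real_inner_comm (ν p) (pd1 ν p)
      linarith
    have A2 : ⟪pd1 ν p, pd1 f p⟫ = -κ₁ p * ρ p ^ 2 := by
      have h0 : pd1 (fun q => ⟪ν q, pd1 f q⟫) p = 0 := pd1_const_on hΩ hp nf1
      rw [pd1_inner (dν p hp) (dpd1f p hp)] at h0
      linear_combination h0 - h11 p hp
    have A3 : ⟪pd1 ν p, pd2 f p⟫ = 0 * ρ p ^ 2 := by
      have h0 : pd1 (fun q => ⟪ν q, pd2 f q⟫) p = 0 := pd1_const_on hΩ hp nf2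
      rw [pd1_inner (dν p hp) (dpd2f p hp)] at h0
      linear_combination h0 - h12 p hp
    have hd := frame_decomp (ρpos p hp) (g11 p hp) (g22 p hp) (g12 p hp) (nuu p hp)
      (nf1 p hp) (nf2 p hp) A2 A3 A1
    rw [hd]; simp
  have W2 : ∀ q ∈ Ω, pd2 ν q = -(κ₂ q • pd2 f q) := by
    intro p hp
    have A1 : ⟪pd2 ν p, ν p⟫ = 0 := by
      have h0 : pd2 (fun q => ⟪ν q, ν q⟫) p = 0 := pd2_const_on hΩ hp nuu
      rw [pd2_inner (dν p hp) (dν p hp)] at h0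
      have hc := real_inner_comm (ν p) (pd2 ν p)
      linarith
    have A2 : ⟪pd2 ν p, pd2 f p⟫ = -κ₂ p * ρ p ^ 2 := by
      have h0 : pd2 (fun q => ⟪ν q, pd2 f q⟫) p = 0 := pd2_const_on hΩ hp nf2
      rw [pd2_inner (dν p hp) (dpd2f p hp)] at h0
      linear_combination h0 - h22 p hp
    have A3 : ⟪pd2 ν p, pd1 f p⟫ = 0 * ρ p ^ 2 := by
      have h0 : pd2 (fun q => ⟪ν q, pd1 f q⟫) p = 0 := pd2_const_on hΩ hp nf1
      rw [pd2_inner (dν p hp) (dpd1f p hp)] at h0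
      rw [← pdsymm hΩ sf hp] at h0
      linear_combination h0 - h12 p hp
    have hd := frame_decomp (ρpos p hp) (g11 p hp) (g22 p hp) (g12 p hp) (nuu p hp)
      (nf1 p hp) (nf2 p hp) A3 A2 A1
    rw [hd]; simp
  intro p hp
  refine ⟨W1 p hp, W2 p hp, ?_⟩
  have hsymmf := pdsymm hΩ sf hp
  -- first fundamental form derivatives
  have F1 : ⟪pd1 (pd1 f) p, pd1 f p⟫ = ρ p * pd1 ρ p := by
    have h0 : pd1 (fun q => ⟪pd1 f q, pd1 f q⟫) p = pd1 (fun q => ρ q * ρ q) p :=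
      pd1_congr hΩ hp (fun q hq => by rw [g11 q hq]; ring)
    rw [pd1_inner (dpd1f p hp) (dpd1f p hp), pd1_mul (dρ p hp) (dρ p hp)] at h0
    have hc := real_inner_comm (pd1 f p) (pd1 (pd1 f) p)
    linear_combination (h0 + hc) / 2
  have F2 : ⟪pd2 (pd1 f) p, pd1 f p⟫ = ρ p * pd2 ρ p := by
    have h0 : pd2 (fun q => ⟪pd1 f q, pd1 f q⟫) p = pd2 (fun q => ρ q * ρ q) p :=
      pd2_congr hΩ hp (fun q hq => by rw [g11 q hq]; ring)
    rw [pd2_inner (dpd1f p hp) (dpd1f p hp), pd2_mul (dρ p hp) (dρ p hp)] at h0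
    have hc := real_inner_comm (pd1 f p) (pd2 (pd1 f) p)
    linear_combination (h0 + hc) / 2
  have F3 : ⟪pd1 (pd2 f) p, pd2 f p⟫ = ρ p * pd1 ρ p := by
    have h0 : pd1 (fun q => ⟪pd2 f q, pd2 f q⟫) p = pd1 (fun q => ρ q * ρ q) p :=
      pd1_congr hΩ hp (fun q hq => by rw [g22 q hq]; ring)
    rw [pd1_inner (dpd2f p hp) (dpd2f p hp), pd1_mul (dρ p hp) (dρ p hp)] at h0
    have hc := real_inner_comm (pd2 f p) (pd1 (pd2 f) p)
    linear_combination (h0 + hc) / 2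
  have F4 : ⟪pd2 (pd2 f) p, pd2 f p⟫ = ρ p * pd2 ρ p := by
    have h0 : pd2 (fun q => ⟪pd2 f q, pd2 f q⟫) p = pd2 (fun q => ρ q * ρ q) p :=
      pd2_congr hΩ hp (fun q hq => by rw [g22 q hq]; ring)
    rw [pd2_inner (dpd2f p hp) (dpd2f p hp), pd2_mul (dρ p hp) (dρ p hp)] at h0
    have hc := real_inner_comm (pd2 f p) (pd2 (pd2 f) p)
    linear_combination (h0 + hc) / 2
  have F5 : ⟪pd1 (pd1 f) p, pd2 f p⟫ = -(ρ p * pd2 ρ p) := by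
    have h0 : pd1 (fun q => ⟪pd1 f q, pd2 f q⟫) p = 0 := pd1_const_on hΩ hp g12
    rw [pd1_inner (dpd1f p hp) (dpd2f p hp)] at h0
    rw [hsymmf] at h0
    have hc := real_inner_comm (pd1 f p) (pd2 (pd1 f) p)
    linear_combination h0 + hc - F2
  have F6 : ⟪pd2 (pd2 f) p, pd1 f p⟫ = -(ρ p * pd1 ρ p) := by
    have h0 : pd2 (fun q => ⟪pd1 f q, pd2 f q⟫) p = 0 := pd2_const_on hΩ hp g12
    rw [pd2_inner (dpd1f p hp) (dpd2f p hp)] at h0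
    rw [← hsymmf] at h0
    have hc := real_inner_comm (pd1 f p) (pd2 (pd2 f) p)
    linear_combination hc + h0 - F3
  -- Codazzi equations
  have J12 : pd1 (pd2 ν) p = -(pd1 κ₂ p • pd2 f p + κ₂ p • pd1 (pd2 f) p) := by
    rw [pd1_congr hΩ hp W2, pd1_neg, pd1_smul (dκ₂ p hp) (dpd2f p hp)]
  have J21 : pd2 (pd1 ν) p = -(pd2 κ₁ p • pd1 f p + κ₁ p • pd2 (pd1 f) p) := by
    rw [pd2_congr hΩ hp W1, pd2_neg, pd2_smul (dκ₁ p hp) (dpd1f p hp)]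
  have Ceq : pd1 κ₂ p • pd2 f p + κ₂ p • pd1 (pd2 f) p
      = pd2 κ₁ p • pd1 f p + κ₁ p • pd1 (pd2 f) p := by
    have h := pdsymm hΩ sν hp
    rw [J12, J21, ← hsymmf] at h
    exact neg_inj.mp h
  have C1 : pd1 κ₂ p * ρ p ^ 2 = (κ₁ p - κ₂ p) * (ρ p * pd1 ρ p) := by
    have h := congrArg (fun w : EuclideanSpace ℝ (Fin 3) => (⟪w, pd2 f p⟫ : ℝ)) Ceq
    simp only [inner_add_left, real_inner_smul_left] at h
    rw [g22 p hp, F3, g12 p hp] at h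
    linear_combination h
  have C2 : pd2 κ₁ p * ρ p ^ 2 = (κ₂ p - κ₁ p) * (ρ p * pd2 ρ p) := by
    have h := congrArg (fun w : EuclideanSpace ℝ (Fin 3) => (⟪w, pd1 f p⟫ : ℝ)) Ceq
    simp only [inner_add_left, real_inner_smul_left] at h
    rw [real_inner_comm (pd1 f p) (pd2 f p), g12 p hp, hsymmf, F2, g11 p hp] at h
    linear_combination -h
  -- constant mean curvature
  have CMC1 : pd1 κ₁ p + pd1 κ₂ p = 0 := by
    have h0 : pd1 (fun q => κ₁ q + κ₂ q) p = 0 := pd1_const_on hΩ hp hcH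
    rwa [pd1_add (dκ₁ p hp) (dκ₂ p hp)] at h0
  have CMC2 : pd2 κ₁ p + pd2 κ₂ p = 0 := by
    have h0 : pd2 (fun q => κ₁ q + κ₂ q) p = 0 := pd2_const_on hΩ hp hcH
    rwa [pd2_add (dκ₁ p hp) (dκ₂ p hp)] at h0
  -- second derivatives of ν
  have J1 : pd1 (pd1 ν) p = -(pd1 κ₁ p • pd1 f p + κ₁ p • pd1 (pd1 f) p) := by
    rw [pd1_congr hΩ hp W1, pd1_neg, pd1_smul (dκ₁ p hp) (dpd1f p hp)]
  have J2 : pd2 (pd2 ν) p = -(pd2 κ₂ p • pd2 f p + κ₂ p • pd2 (pd2 f) p) := by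
    rw [pd2_congr hΩ hp W2, pd2_neg, pd2_smul (dκ₂ p hp) (dpd2f p hp)]
  have LE1 : ⟪pd1 (pd1 ν) p + pd2 (pd2 ν) p, pd1 f p⟫ = 0 * ρ p ^ 2 := by
    rw [inner_add_left, J1, J2]
    simp only [inner_neg_left, inner_add_left, real_inner_smul_left]
    rw [g11 p hp, F1, F6, real_inner_comm (pd1 f p) (pd2 f p), g12 p hp]
    linear_combination C1 - ρ p ^ 2 * CMC1
  have LE2 : ⟪pd1 (pd1 ν) p + pd2 (pd2 ν) p, pd2 f p⟫ = 0 * ρ p ^ 2 := by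
    rw [inner_add_left, J1, J2]
    simp only [inner_neg_left, inner_add_left, real_inner_smul_left]
    rw [g22 p hp, F4, F5, g12 p hp]
    linear_combination C2 - ρ p ^ 2 * CMC2
  have LEn : ⟪pd1 (pd1 ν) p + pd2 (pd2 ν) p, ν p⟫ = -(ρ p ^ 2 * (κ₁ p ^ 2 + κ₂ p ^ 2)) := by
    rw [inner_add_left, J1, J2]
    simp only [inner_neg_left, inner_add_left, real_inner_smul_left]
    rw [real_inner_comm (ν p) (pd1 f p), nf1 p hp,
      real_inner_comm (ν p) (pd1 (pd1 f) p), h11 p hp,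
      real_inner_comm (ν p) (pd2 f p), nf2 p hp,
      real_inner_comm (ν p) (pd2 (pd2 f) p), h22 p hp]
    ring
  have hd := frame_decomp (ρpos p hp) (g11 p hp) (g22 p hp) (g12 p hp) (nuu p hp)
    (nf1 p hp) (nf2 p hp) LE1 LE2 LEn
  rw [hd]; simp
end

section
/- Let Ω ⊆ ℝ² be open, and let f : Ω → ℍ be a purely imaginary quaternion-valued immersion in conformal curvature coordinates with conformal factor ρ, unit normal ν and principal curvatures κ₁, κ₂, such that ν = ρ⁻²·(∂₁f)·(∂₂f) (quaternion product) and κ₁ + κ₂ = 2 on Ω. Then for every smooth u : Ω → ℝ one has, at every point of Ω, the quaternion identity: −(∂₂(uν))·(∂₁f) + (∂₁(uν))·(∂₂f) = −(∂₁u)·∂₁f − (∂₂u)·∂₂f − 2ρ²·u·ν. -/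
open scoped RealInnerProductSpace Quaternion ContDiff

/-- `f : Ω → Im ℍ ≅ ℝ³` is a purely imaginary quaternion-valued immersion in conformal
curvature coordinates, with conformal factor `ρ`, unit normal `ν` and principal
curvatures `κ₁, κ₂`. -/
structure IsCCCQ (Ω : Set (ℝ × ℝ)) (f ν : ℝ × ℝ → ℍ[ℝ])
    (ρ κ₁ κ₂ : ℝ × ℝ → ℝ) : Prop where
  smooth_f : ContDiffOn ℝ ∞ f Ω
  smooth_ρ : ContDiffOn ℝ ∞ ρ Ω
  smooth_ν : ContDiffOn ℝ ∞ ν Ω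
  smooth_κ₁ : ContDiffOn ℝ ∞ κ₁ Ω
  smooth_κ₂ : ContDiffOn ℝ ∞ κ₂ Ω
  ρ_pos : ∀ p ∈ Ω, 0 < ρ p
  f_im : ∀ p ∈ Ω, (f p).re = 0
  nu_im : ∀ p ∈ Ω, (ν p).re = 0
  g11 : ∀ p ∈ Ω, ⟪pd1 f p, pd1 f p⟫ = ρ p ^ 2
  g22 : ∀ p ∈ Ω, ⟪pd2 f p, pd2 f p⟫ = ρ p ^ 2
  g12 : ∀ p ∈ Ω, ⟪pd1 f p, pd2 f p⟫ = 0
  nu_unit : ∀ p ∈ Ω, ⟪ν p, ν p⟫ = 1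
  nu_f1 : ∀ p ∈ Ω, ⟪ν p, pd1 f p⟫ = 0
  nu_f2 : ∀ p ∈ Ω, ⟪ν p, pd2 f p⟫ = 0
  h12 : ∀ p ∈ Ω, ⟪ν p, pd1 (pd2 f) p⟫ = 0
  h11 : ∀ p ∈ Ω, ⟪ν p, pd1 (pd1 f) p⟫ = ρ p ^ 2 * κ₁ p
  h22 : ∀ p ∈ Ω, ⟪ν p, pd2 (pd2 f) p⟫ = ρ p ^ 2 * κ₂ p

private lemma star_im {a : ℍ[ℝ]} (ha : a.re = 0) : star a = -a := Quaternion.star_eq_neg.2 ha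

private lemma re_mul_im {a b : ℍ[ℝ]} (hb : b.re = 0) : (a * b).re = -⟪a, b⟫ := by
  rw [Quaternion.inner_def, star_im hb]; simp

private lemma mul_anticomm {a b : ℍ[ℝ]} (ha : a.re = 0) (hb : b.re = 0) (hab : ⟪a, b⟫ = 0) :
    b * a = -(a * b) := by
  have h1 : b * a = star (a * b) := by
    rw [star_mul, star_im ha, star_im hb, neg_mul_neg]
  have h2 := Quaternion.self_add_star' (a * b)
  rw [re_mul_im hb, hab] at h2
  norm_num at h2
  rw [star_mul] at h1
  rw [h1]
  exact eq_neg_of_add_eq_zero_right h2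

private lemma mul_self_im {a : ℍ[ℝ]} (ha : a.re = 0) : a * a = ((-⟪a, a⟫ : ℝ) : ℍ[ℝ]) := by
  have h1 : a * star a = ((⟪a, a⟫ : ℝ) : ℍ[ℝ]) := by
    rw [Quaternion.self_mul_star, Quaternion.inner_self]
  rw [star_im ha, mul_neg] at h1
  rw [Quaternion.coe_neg, ← h1, neg_neg]

private lemma quat_ab_mul_a {a b : ℍ[ℝ]} {r : ℝ} (ha : a.re = 0) (hb : b.re = 0)
    (haa : ⟪a, a⟫ = r) (hab : ⟪a, b⟫ = 0) : (a * b) * a = r • b := by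
  calc (a * b) * a = a * (b * a) := mul_assoc _ _ _
    _ = a * -(a * b) := by rw [mul_anticomm ha hb hab]
    _ = -((a * a) * b) := by rw [mul_neg, mul_assoc]
    _ = -(((-r : ℝ) : ℍ[ℝ]) * b) := by rw [mul_self_im ha, haa]
    _ = r • b := by rw [Quaternion.coe_mul_eq_smul, neg_smul, neg_neg]

private lemma quat_ab_mul_b {a b : ℍ[ℝ]} {r : ℝ} (hb : b.re = 0)
    (hbb : ⟪b, b⟫ = r) : (a * b) * b = (-r) • a := by
  calc (a * b) * b = a * (b * b) := mul_assoc _ _ _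
    _ = a * ((-r : ℝ) : ℍ[ℝ]) := by rw [mul_self_im hb, hbb]
    _ = (-r) • a := Quaternion.mul_coe_eq_smul _ _

private lemma quat_ab_sq {a b : ℍ[ℝ]} {r : ℝ} (ha : a.re = 0) (hb : b.re = 0)
    (haa : ⟪a, a⟫ = r) (hbb : ⟪b, b⟫ = r) (hab : ⟪a, b⟫ = 0) :
    (a * b) * (a * b) = ((-(r * r) : ℝ) : ℍ[ℝ]) := by
  calc (a * b) * (a * b) = ((a * b) * a) * b := (mul_assoc _ _ _).symm
    _ = (r • b) * b := by rw [quat_ab_mul_a ha hb haa hab]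
    _ = r • (b * b) := smul_mul_assoc _ _ _
    _ = r • ((-r : ℝ) : ℍ[ℝ]) := by rw [mul_self_im hb, hbb]
    _ = ((-(r * r) : ℝ) : ℍ[ℝ]) := by rw [Quaternion.smul_coe]; norm_num [mul_comm]

private lemma quat_decomp {a b x : ℍ[ℝ]} {r lam : ℝ} (hr : r ≠ 0)
    (ha : a.re = 0) (hb : b.re = 0) (hx : x.re = 0)
    (haa : ⟪a, a⟫ = r) (hbb : ⟪b, b⟫ = r) (hab : ⟪a, b⟫ = 0)
    (hxa : ⟪x, a⟫ = 0) (hxb : ⟪x, b⟫ = 0) (hlam : ⟪x, r⁻¹ • (a * b)⟫ = lam) :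
    x = lam • (r⁻¹ • (a * b)) := by
  set n : ℍ[ℝ] := r⁻¹ • (a * b) with hn
  have hax : x * a = -(a * x) := mul_anticomm ha hx (by rw [real_inner_comm]; exact hxa)
  have hbx : x * b = -(b * x) := mul_anticomm hb hx (by rw [real_inner_comm]; exact hxb)
  have hxcomm : x * (a * b) = (a * b) * x := by
    calc x * (a * b) = (x * a) * b := (mul_assoc _ _ _).symm
      _ = -(a * (x * b)) := by rw [hax, neg_mul, mul_assoc]
      _ = -(a * -(b * x)) := by rw [hbx]
      _ = (a * b) * x := by rw [mul_neg, neg_neg, ← mul_assoc]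
  have hnx : x * n = n * x := by rw [hn, mul_smul_comm, smul_mul_assoc, hxcomm]
  have hnre : n.re = 0 := by
    rw [hn]
    simp [re_mul_im hb, hab]
  have hstar : star (x * n) = x * n := by
    rw [star_mul, star_im hnre, star_im hx, neg_mul_neg, ← hnx]
  have hqre : x * n = (((x * n).re : ℝ) : ℍ[ℝ]) := Quaternion.star_eq_self.1 hstar
  have hnn : n * n = -1 := by
    rw [hn, smul_mul_assoc, mul_smul_comm, quat_ab_sq ha hb haa hbb hab, smul_smul,
      Quaternion.smul_coe]
    have : r⁻¹ * r⁻¹ * -(r * r) = -1 := by field_simp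
    rw [this]
    push_cast
    ring_nf
  have hxeq : x = (-(x * n).re) • n := by
    have h1 : -((x * n) * n) = x := by rw [mul_assoc, hnn, mul_neg, mul_one, neg_neg]
    calc x = -((x * n) * n) := h1.symm
      _ = -((((x * n).re : ℝ) : ℍ[ℝ]) * n) := by rw [← hqre]
      _ = (-(x * n).re) • n := by rw [Quaternion.coe_mul_eq_smul, neg_smul]
  have hnn1 : ⟪n, n⟫ = 1 := by
    rw [Quaternion.inner_def, star_im hnre, mul_neg, hnn]
    simp
  have hl : lam = -(x * n).re := by
    rw [← hlam]
    nth_rewrite 1 [hxeq]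
    rw [real_inner_smul_left, hnn1, mul_one]
  rw [hl]
  exact hxeq


private lemma fderiv_eq_on {E : Type*} [NormedAddCommGroup E] [NormedSpace ℝ E]
    {F G : ℝ × ℝ → E} {Ω : Set (ℝ × ℝ)} (hΩ : IsOpen Ω) {p : ℝ × ℝ} (hp : p ∈ Ω)
    (h : ∀ q ∈ Ω, F q = G q) : fderiv ℝ F p = fderiv ℝ G p :=
  Filter.EventuallyEq.fderiv_eq (by filter_upwards [hΩ.mem_nhds hp] with q hq using h q hq)

private lemma fderiv_mul_app {g h : ℝ × ℝ → ℍ[ℝ]} {p : ℝ × ℝ} (hg : DifferentiableAt ℝ g p)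
    (hh : DifferentiableAt ℝ h p) (v : ℝ × ℝ) :
    fderiv ℝ (fun q => g q * h q) p v = g p * fderiv ℝ h p v + fderiv ℝ g p v * h p := by
  rw [fderiv_fun_mul' hg hh]
  simp [smul_eq_mul]

private lemma fderiv_smul_app {c : ℝ × ℝ → ℝ} {h : ℝ × ℝ → ℍ[ℝ]} {p : ℝ × ℝ}
    (hc : DifferentiableAt ℝ c p) (hh : DifferentiableAt ℝ h p) (v : ℝ × ℝ) :
    fderiv ℝ (fun q => c q • h q) p v = c p • fderiv ℝ h p v + fderiv ℝ c p v • h p := by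
  rw [fderiv_fun_smul hc hh]
  simp

private lemma re_fderiv_zero {g : ℝ × ℝ → ℍ[ℝ]} {Ω : Set (ℝ × ℝ)} (hΩ : IsOpen Ω) {p : ℝ × ℝ}
    (hp : p ∈ Ω) (hg : DifferentiableAt ℝ g p) (h0 : ∀ q ∈ Ω, (g q).re = 0) (v : ℝ × ℝ) :
    (fderiv ℝ g p v).re = 0 := by
  have hre : ∀ y : ℍ[ℝ], ⟪(1 : ℍ[ℝ]), y⟫ = y.re := fun y => by
    rw [Quaternion.inner_def]; simp
  have h1 : fderiv ℝ (fun q => ⟪(1 : ℍ[ℝ]), g q⟫) p = fderiv ℝ (fun _ : ℝ × ℝ => (0 : ℝ)) p :=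
    fderiv_eq_on hΩ hp (fun q hq => by rw [hre]; exact h0 q hq)
  rw [fderiv_fun_const] at h1
  have h2 : fderiv ℝ (fun q => ⟪(1 : ℍ[ℝ]), g q⟫) p v
      = ⟪(1 : ℍ[ℝ]), fderiv ℝ g p v⟫ + ⟪fderiv ℝ (fun _ : ℝ × ℝ => (1 : ℍ[ℝ])) p v, g p⟫ :=
    fderiv_inner_apply (𝕜 := ℝ) (differentiableAt_const _) hg v
  rw [h1] at h2
  simp only [fderiv_fun_const, Pi.zero_apply, ContinuousLinearMap.zero_apply, inner_zero_left,
    add_zero] at h2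
  rw [← hre]
  exact h2.symm

/-- For a CMC (`κ₁ + κ₂ = 2`) purely imaginary quaternionic immersion
with `ν = ρ⁻²·∂₁f·∂₂f`, one has
`−∂₂(uν)·∂₁f + ∂₁(uν)·∂₂f = −∂₁u·∂₁f − ∂₂u·∂₂f − 2ρ²·u·ν`. -/
theorem d_u_nu_J0_wedge_df_J0 (Ω : Set (ℝ × ℝ)) (hΩ : IsOpen Ω)
    (f ν : ℝ × ℝ → ℍ[ℝ]) (ρ κ₁ κ₂ : ℝ × ℝ → ℝ)
    (hccc : IsCCCQ Ω f ν ρ κ₁ κ₂)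
    (hν : ∀ p ∈ Ω, ν p = (ρ p ^ 2)⁻¹ • (pd1 f p * pd2 f p))
    (hH : ∀ p ∈ Ω, κ₁ p + κ₂ p = 2)
    (u : ℝ × ℝ → ℝ) (hu : ContDiffOn ℝ ∞ u Ω) :
    ∀ p ∈ Ω,
      -(pd2 (fun q => u q • ν q) p * pd1 f p) + pd1 (fun q => u q • ν q) p * pd2 f p
        = -(pd1 u p • pd1 f p) - pd2 u p • pd2 f p - (2 * ρ p ^ 2 * u p) • ν p := by
  intro p hp
  have hmem : Ω ∈ nhds p := hΩ.mem_nhds hp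
  -- smoothness and differentiability
  have hfA : ∀ q ∈ Ω, ContDiffAt ℝ ∞ f q := fun q hq => hccc.smooth_f.contDiffAt (hΩ.mem_nhds hq)
  have hfd : ∀ q ∈ Ω, DifferentiableAt ℝ f q := fun q hq =>
    (hfA q hq).differentiableAt (by norm_num)
  have hfdA : ∀ q ∈ Ω, ContDiffAt ℝ ∞ (fderiv ℝ f) q := fun q hq =>
    (hfA q hq).fderiv_right (by norm_num)
  have hf1d : ∀ q ∈ Ω, DifferentiableAt ℝ (pd1 f) q := fun q hq =>
    (((hfdA q hq).clm_apply contDiffAt_const).differentiableAt (by norm_num) :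
      DifferentiableAt ℝ (fun q => fderiv ℝ f q (1, 0)) q)
  have hf2d : ∀ q ∈ Ω, DifferentiableAt ℝ (pd2 f) q := fun q hq =>
    (((hfdA q hq).clm_apply contDiffAt_const).differentiableAt (by norm_num) :
      DifferentiableAt ℝ (fun q => fderiv ℝ f q (0, 1)) q)
  have hν_d : DifferentiableAt ℝ ν p := (hccc.smooth_ν.contDiffAt hmem).differentiableAt (by norm_num)
  have hu_d : DifferentiableAt ℝ u p := (hu.contDiffAt hmem).differentiableAt (by norm_num)
  -- imaginary parts
  have him1 : ∀ q ∈ Ω, (pd1 f q).re = 0 := fun q hq =>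
    re_fderiv_zero hΩ hq (hfd q hq) hccc.f_im (1, 0)
  have him2 : ∀ q ∈ Ω, (pd2 f q).re = 0 := fun q hq =>
    re_fderiv_zero hΩ hq (hfd q hq) hccc.f_im (0, 1)
  have him11 : (pd1 (pd1 f) p).re = 0 := re_fderiv_zero hΩ hp (hf1d p hp) him1 (1, 0)
  have him22 : (pd2 (pd2 f) p).re = 0 := re_fderiv_zero hΩ hp (hf2d p hp) him2 (0, 1)
  have hr0 : ∀ q ∈ Ω, (ρ q ^ 2 : ℝ) ≠ 0 := fun q hq => ne_of_gt (pow_pos (hccc.ρ_pos q hq) 2)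
  -- pointwise quaternionic frame relations
  have hna : ∀ q ∈ Ω, ν q * pd1 f q = pd2 f q := fun q hq => by
    rw [hν q hq, smul_mul_assoc,
      quat_ab_mul_a (him1 q hq) (him2 q hq) (hccc.g11 q hq) (hccc.g12 q hq), smul_smul,
      inv_mul_cancel₀ (hr0 q hq), one_smul]
  have hnb : ∀ q ∈ Ω, ν q * pd2 f q = -pd1 f q := fun q hq => by
    rw [hν q hq, smul_mul_assoc, quat_ab_mul_b (him2 q hq) (hccc.g22 q hq), smul_smul,
      show (ρ q ^ 2)⁻¹ * -(ρ q ^ 2) = -1 by rw [mul_neg, inv_mul_cancel₀ (hr0 q hq)], neg_smul, one_smul]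
  -- Schwarz symmetry of second derivatives at p
  have hsnd : DifferentiableAt ℝ (fderiv ℝ f) p := (hfdA p hp).differentiableAt (by norm_num)
  have hkey : ∀ w v : ℝ × ℝ, fderiv ℝ (fun q => fderiv ℝ f q w) p v
      = fderiv ℝ (fderiv ℝ f) p v w := by
    intro w v
    rw [fderiv_clm_apply hsnd (differentiableAt_const w)]
    simp
  have hsymm := (hfA p hp).isSymmSndFDerivAt (by simp; exact WithTop.coe_le_coe.2 le_top)
  have hschwarz : pd2 (pd1 f) p = pd1 (pd2 f) p := by
    show fderiv ℝ (fun q => fderiv ℝ f q (1, 0)) p (0, 1)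
      = fderiv ℝ (fun q => fderiv ℝ f q (0, 1)) p (1, 0)
    rw [hkey, hkey]
    exact hsymm.eq _ _
  -- derivatives of the metric relations
  have hg11' : ∀ v, ⟪pd1 f p, fderiv ℝ (pd1 f) p v⟫ + ⟪fderiv ℝ (pd1 f) p v, pd1 f p⟫
      = fderiv ℝ (fun q => ρ q ^ 2) p v := by
    intro v
    have h1 : fderiv ℝ (fun q => ⟪pd1 f q, pd1 f q⟫) p = fderiv ℝ (fun q => ρ q ^ 2) p :=
      fderiv_eq_on hΩ hp hccc.g11
    have h2 := fderiv_inner_apply (𝕜 := ℝ) (hf1d p hp) (hf1d p hp) v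
    rw [h1] at h2
    exact h2.symm
  have hg22' : ∀ v, ⟪pd2 f p, fderiv ℝ (pd2 f) p v⟫ + ⟪fderiv ℝ (pd2 f) p v, pd2 f p⟫
      = fderiv ℝ (fun q => ρ q ^ 2) p v := by
    intro v
    have h1 : fderiv ℝ (fun q => ⟪pd2 f q, pd2 f q⟫) p = fderiv ℝ (fun q => ρ q ^ 2) p :=
      fderiv_eq_on hΩ hp hccc.g22
    have h2 := fderiv_inner_apply (𝕜 := ℝ) (hf2d p hp) (hf2d p hp) v
    rw [h1] at h2
    exact h2.symm
  have hg12' : ∀ v, ⟪pd1 f p, fderiv ℝ (pd2 f) p v⟫ + ⟪fderiv ℝ (pd1 f) p v, pd2 f p⟫ = 0 := by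
    intro v
    have h1 : fderiv ℝ (fun q => ⟪pd1 f q, pd2 f q⟫) p = fderiv ℝ (fun _ : ℝ × ℝ => (0 : ℝ)) p :=
      fderiv_eq_on hΩ hp hccc.g12
    rw [fderiv_fun_const] at h1
    have h2 := fderiv_inner_apply (𝕜 := ℝ) (hf1d p hp) (hf2d p hp) v
    rw [h1] at h2
    simpa using h2.symm
  -- inner products of the Laplacian with the frame
  have hxa : ⟪pd1 (pd1 f) p + pd2 (pd2 f) p, pd1 f p⟫ = 0 := by
    have h1 : ⟪pd1 f p, pd1 (pd1 f) p⟫ + ⟪pd1 (pd1 f) p, pd1 f p⟫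
        = fderiv ℝ (fun q => ρ q ^ 2) p (1, 0) := hg11' (1, 0)
    have h2 : ⟪pd2 f p, pd1 (pd2 f) p⟫ + ⟪pd1 (pd2 f) p, pd2 f p⟫
        = fderiv ℝ (fun q => ρ q ^ 2) p (1, 0) := hg22' (1, 0)
    have h3 : ⟪pd1 f p, pd2 (pd2 f) p⟫ + ⟪pd2 (pd1 f) p, pd2 f p⟫ = 0 := hg12' (0, 1)
    rw [hschwarz] at h3
    rw [inner_add_left]
    linarith [real_inner_comm (pd1 (pd1 f) p) (pd1 f p),
      real_inner_comm (pd2 (pd2 f) p) (pd1 f p),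
      real_inner_comm (pd1 (pd2 f) p) (pd2 f p)]
  have hxb : ⟪pd1 (pd1 f) p + pd2 (pd2 f) p, pd2 f p⟫ = 0 := by
    have h1 : ⟪pd1 f p, pd2 (pd1 f) p⟫ + ⟪pd2 (pd1 f) p, pd1 f p⟫
        = fderiv ℝ (fun q => ρ q ^ 2) p (0, 1) := hg11' (0, 1)
    have h2 : ⟪pd2 f p, pd2 (pd2 f) p⟫ + ⟪pd2 (pd2 f) p, pd2 f p⟫
        = fderiv ℝ (fun q => ρ q ^ 2) p (0, 1) := hg22' (0, 1)
    have h3 : ⟪pd1 f p, pd1 (pd2 f) p⟫ + ⟪pd1 (pd1 f) p, pd2 f p⟫ = 0 := hg12' (1, 0)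
    rw [hschwarz] at h1
    rw [inner_add_left]
    linarith [real_inner_comm (pd1 (pd1 f) p) (pd2 f p),
      real_inner_comm (pd2 (pd2 f) p) (pd2 f p),
      real_inner_comm (pd1 (pd2 f) p) (pd1 f p)]
  have hxn : ⟪pd1 (pd1 f) p + pd2 (pd2 f) p, (ρ p ^ 2)⁻¹ • (pd1 f p * pd2 f p)⟫
      = 2 * ρ p ^ 2 := by
    rw [← hν p hp, inner_add_left]
    linear_combination real_inner_comm (ν p) (pd1 (pd1 f) p) +
      real_inner_comm (ν p) (pd2 (pd2 f) p) + hccc.h11 p hp + hccc.h22 p hp +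
      (ρ p ^ 2) * hH p hp
  -- the Laplace identity Δf = 2ρ²ν
  have hxdec : pd1 (pd1 f) p + pd2 (pd2 f) p = (2 * ρ p ^ 2) • ν p := by
    have h := quat_decomp (hr0 p hp) (him1 p hp) (him2 p hp)
      (by simp [him11, him22] : (pd1 (pd1 f) p + pd2 (pd2 f) p).re = 0)
      (hccc.g11 p hp) (hccc.g22 p hp) (hccc.g12 p hp) hxa hxb hxn
    rw [hν p hp]
    exact h
  -- Weingarten-type relations
  have hD1 : ν p * pd1 (pd2 f) p + pd1 ν p * pd2 f p = -(pd1 (pd1 f) p) := by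
    have e1 : fderiv ℝ (fun q => ν q * pd2 f q) p = fderiv ℝ (fun q => -pd1 f q) p :=
      fderiv_eq_on hΩ hp hnb
    have e2 : fderiv ℝ (fun q => ν q * pd2 f q) p (1, 0)
        = ν p * pd1 (pd2 f) p + pd1 ν p * pd2 f p := fderiv_mul_app hν_d (hf2d p hp) (1, 0)
    have e3 : fderiv ℝ (fun q => -pd1 f q) p (1, 0) = -(pd1 (pd1 f) p) := by
      rw [fderiv_fun_neg]
      rfl
    rw [← e2, e1, e3]
  have hD2 : ν p * pd2 (pd1 f) p + pd2 ν p * pd1 f p = pd2 (pd2 f) p := by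
    have e1 : fderiv ℝ (fun q => ν q * pd1 f q) p = fderiv ℝ (pd2 f) p :=
      fderiv_eq_on hΩ hp hna
    have e2 : fderiv ℝ (fun q => ν q * pd1 f q) p (0, 1)
        = ν p * pd2 (pd1 f) p + pd2 ν p * pd1 f p := fderiv_mul_app hν_d (hf1d p hp) (0, 1)
    rw [← e2, e1]
    rfl
  have hW1 : pd1 ν p * pd2 f p = -(pd1 (pd1 f) p) - ν p * pd1 (pd2 f) p :=
    eq_sub_of_add_eq' hD1
  have hW2 : pd2 ν p * pd1 f p = pd2 (pd2 f) p - ν p * pd2 (pd1 f) p :=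
    eq_sub_of_add_eq' hD2
  have hf22' : pd2 (pd2 f) p = (2 * ρ p ^ 2) • ν p - pd1 (pd1 f) p := by
    rw [← hxdec]; abel
  -- expand the derivatives of u • ν
  have hE1 : pd1 (fun q => u q • ν q) p = u p • pd1 ν p + pd1 u p • ν p :=
    fderiv_smul_app hu_d hν_d (1, 0)
  have hE2 : pd2 (fun q => u q • ν q) p = u p • pd2 ν p + pd2 u p • ν p :=
    fderiv_smul_app hu_d hν_d (0, 1)
  -- final assembly
  rw [hE1, hE2, add_mul, add_mul]
  simp only [smul_mul_assoc]
  rw [hna p hp, hnb p hp, hW1, hW2, hschwarz, hf22']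
  module
end

section
/- Let Ω ⊆ ℝ² be open, let f : Ω → ℍ be a continuously differentiable map with purely imaginary values, let f̃ : Ω → ℍ be a continuously differentiable map with |f̃| ≡ 1 satisfying ∂₁f̃ = f̃·∂₂f and ∂₂f̃ = −f̃·∂₁f on Ω, and let α be a fixed purely imaginary quaternion. Then the map ε := f̃⁻¹·α·f̃ takes purely imaginary values, |ε| ≡ |α|, and ε satisfies ∂₁ε = ε·∂₂f − ∂₂f·ε and ∂₂ε = ∂₁f·ε − ε·∂₁f on Ω. -/
open scoped RealInnerProductSpace Quaternion

instance : StarModule ℝ ℍ[ℝ] := ⟨fun r x => by ext <;> simp⟩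

lemma star_eq_neg_of_re {x : ℍ[ℝ]} (h : x.re = 0) : star x = -x := by
  ext <;> simp [h]

lemma re_eq_zero_of_star {x : ℍ[ℝ]} (h : star x = -x) : x.re = 0 := by
  have h' : x.re = -x.re := by simpa using congrArg (fun y : ℍ[ℝ] => y.re) h
  linarith

lemma key (u : ℝ × ℝ → ℍ[ℝ]) (α : ℍ[ℝ]) {p : ℝ × ℝ} (hu : DifferentiableAt ℝ u p) (v : ℝ × ℝ) :
    fderiv ℝ (fun q => star (u q) * α * u q) p v
      = star (fderiv ℝ u p v) * α * u p + star (u p) * α * fderiv ℝ u p v := by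
  have h1 : HasFDerivAt (fun q => star (u q))
      (((starL' ℝ : ℍ[ℝ] ≃L[ℝ] ℍ[ℝ]) : ℍ[ℝ] →L[ℝ] ℍ[ℝ]) ∘L fderiv ℝ u p) p :=
    hu.hasFDerivAt.star
  have h2 := h1.mul' (hasFDerivAt_const α p)
  have h3 := h2.mul' hu.hasFDerivAt
  rw [show (fun q => star (u q) * α * u q) = ((fun q => star (u q)) * fun x => α) * u from rfl,
    h3.fderiv]
  simp [mul_assoc]
  exact add_comm _ _

/-- For a conjugate cousin `f̃` of `f` and a fixed imaginary quaternion
`α`, the field `ε = f̃⁻¹·α·f̃` is imaginary of constant length `|α|` and solves the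
homogeneous conjugate variation system. -/
theorem rotation_field_solves_homogeneous (Ω : Set (ℝ × ℝ)) (hΩ : IsOpen Ω)
    (f : ℝ × ℝ → ℍ[ℝ]) (hf : ContDiffOn ℝ 1 f Ω) (hf_im : ∀ p ∈ Ω, (f p).re = 0)
    (ft : ℝ × ℝ → ℍ[ℝ]) (hft : ContDiffOn ℝ 1 ft Ω)
    (hft_norm : ∀ p ∈ Ω, ‖ft p‖ = 1)
    (hft1 : ∀ p ∈ Ω, pd1 ft p = ft p * pd2 f p)
    (hft2 : ∀ p ∈ Ω, pd2 ft p = -(ft p * pd1 f p))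
    (α : ℍ[ℝ]) (hα : α.re = 0) :
    ∀ p ∈ Ω,
      ((ft p)⁻¹ * α * ft p).re = 0 ∧
      ‖(ft p)⁻¹ * α * ft p‖ = ‖α‖ ∧
      pd1 (fun q => (ft q)⁻¹ * α * ft q) p
        = (ft p)⁻¹ * α * ft p * pd2 f p - pd2 f p * ((ft p)⁻¹ * α * ft p) ∧
      pd2 (fun q => (ft q)⁻¹ * α * ft q) p
        = pd1 f p * ((ft p)⁻¹ * α * ft p) - (ft p)⁻¹ * α * ft p * pd1 f p := by
  intro p hp
  have hmem : Ω ∈ nhds p := hΩ.mem_nhds hp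
  have hft_ne : ft p ≠ 0 := by
    intro h
    have := hft_norm p hp
    rw [h] at this; simp at this
  have hinv : ∀ q ∈ Ω, (ft q)⁻¹ = star (ft q) := by
    intro q hq
    have hn : Quaternion.normSq (ft q) = 1 := by
      rw [Quaternion.normSq_eq_norm_mul_self, hft_norm q hq]; ring
    rw [Quaternion.inv_def, hn]; simp
  have heq : (fun q => (ft q)⁻¹ * α * ft q) =ᶠ[nhds p] (fun q => star (ft q) * α * ft q) := by
    filter_upwards [hmem] with q hq
    rw [hinv q hq]
  have hftd : DifferentiableAt ℝ ft p :=
    (hft.differentiableOn one_ne_zero p hp).differentiableAt hmem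
  have hfd : DifferentiableAt ℝ f p :=
    (hf.differentiableOn one_ne_zero p hp).differentiableAt hmem
  -- the derivative of f is purely imaginary
  have him : ∀ v, star (fderiv ℝ f p v) = -(fderiv ℝ f p v) := by
    intro v
    have e1 : (fun q => star (f q)) =ᶠ[nhds p] (fun q => -f q) := by
      filter_upwards [hmem] with q hq
      exact star_eq_neg_of_re (hf_im q hq)
    have d1 : HasFDerivAt (fun q => star (f q))
        (((starL' ℝ : ℍ[ℝ] ≃L[ℝ] ℍ[ℝ]) : ℍ[ℝ] →L[ℝ] ℍ[ℝ]) ∘L fderiv ℝ f p) p :=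
      hfd.hasFDerivAt.star
    calc star (fderiv ℝ f p v) = fderiv ℝ (fun q => star (f q)) p v := by
          rw [d1.fderiv]; simp
      _ = fderiv ℝ (fun q => -f q) p v := by rw [e1.fderiv_eq]
      _ = -(fderiv ℝ f p v) := by rw [fderiv_fun_neg]; simp
  have hstar_inv : (ft p)⁻¹ = star (ft p) := hinv p hp
  refine ⟨?_, ?_, ?_, ?_⟩
  · -- purely imaginary
    apply re_eq_zero_of_star
    rw [hstar_inv]
    simp only [star_mul, star_star]
    rw [star_eq_neg_of_re hα]
    noncomm_ring
  · -- norm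
    rw [norm_mul, norm_mul, norm_inv, hft_norm p hp]
    simp
  · -- pd1
    have hd : fderiv ℝ (fun q => (ft q)⁻¹ * α * ft q) p
        = fderiv ℝ (fun q => star (ft q) * α * ft q) p := heq.fderiv_eq
    have hk := key ft α hftd (1, 0)
    have hpd1 : fderiv ℝ ft p (1, 0) = ft p * pd2 f p := hft1 p hp
    have hpd2f : fderiv ℝ f p (0, 1) = pd2 f p := rfl
    show fderiv ℝ (fun q => (ft q)⁻¹ * α * ft q) p (1, 0) = _
    rw [hd, hk, hpd1, hstar_inv, star_mul]
    rw [show star (pd2 f p) = -(pd2 f p) from him (0, 1)]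
    noncomm_ring
  · -- pd2
    have hd : fderiv ℝ (fun q => (ft q)⁻¹ * α * ft q) p
        = fderiv ℝ (fun q => star (ft q) * α * ft q) p := heq.fderiv_eq
    have hk := key ft α hftd (0, 1)
    have hpd2 : fderiv ℝ ft p (0, 1) = -(ft p * pd1 f p) := hft2 p hp
    show fderiv ℝ (fun q => (ft q)⁻¹ * α * ft q) p (0, 1) = _
    rw [hd, hk, hpd2, hstar_inv, star_neg, star_mul]
    rw [show star (pd1 f p) = -(pd1 f p) from him (1, 0)]
    noncomm_ring
end
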